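/- arXiv:2003.09409 — 8 statements merged into one kernel-verified Lean document; each statement's English description precedes it below -/
import Mathlib

section
/- The achromatic number of the Kneser graph K(5,2) (the Petersen graph) equals 5. -/
open Finset

/-- The Kneser graph `K(n,k)`: vertices are the `k`-subsets of `{1,…,n}`,
adjacent iff disjoint. -/
def kneser (n k : ℕ) : SimpleGraph {s : Finset (Fin n) // s.card = k} where
  Adj x y := x ≠ y ∧ Disjoint x.1 y.1
  symm := ⟨fun _ _ h => ⟨h.1.symm, h.2.symm⟩⟩
  loopless := ⟨fun _ h => h.1 rfl⟩

/-- A proper coloring with colors in `Fin l`. -/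
def IsProperColoring {V : Type*} (G : SimpleGraph V) {l : ℕ} (c : V → Fin l) : Prop :=
  ∀ u v, G.Adj u v → c u ≠ c v

/-- A complete `l`-coloring: surjective, and every pair of distinct colors
appears on the endpoints of some edge. -/
def IsCompleteColoring {V : Type*} (G : SimpleGraph V) {l : ℕ} (c : V → Fin l) : Prop :=
  Function.Surjective c ∧
    ∀ i j : Fin l, i ≠ j → ∃ u v, G.Adj u v ∧ c u = i ∧ c v = j

/-- Numbers `l` admitting a proper complete `l`-coloring; the achromatic number
is the greatest element of this set. -/
def achromaticSet {V : Type*} (G : SimpleGraph V) : Set ℕ :=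
  {l | ∃ c : V → Fin l, IsProperColoring G c ∧ IsCompleteColoring G c}

/-- Numbers `l` admitting a (not necessarily proper) complete `l`-coloring; the
pseudoachromatic number is the greatest element of this set. -/
def pseudoachromaticSet {V : Type*} (G : SimpleGraph V) : Set ℕ :=
  {l | ∃ c : V → Fin l, IsCompleteColoring G c}

instance knAdjDec (n k : ℕ) : DecidableRel (kneser n k).Adj :=
  fun x y => inferInstanceAs (Decidable (x ≠ y ∧ Disjoint x.1 y.1))

/-- The vertex type of `K(5,2)`. -/
abbrev PV := {s : Finset (Fin 5) // s.card = 2}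

lemma cardPV : Fintype.card PV = 10 := by decide

lemma degPV (v : PV) : ((univ : Finset PV).filter (fun w => (kneser 5 2).Adj v w)).card = 3 := by
  revert v; decide

/-- An explicit proper complete 5-coloring of the Petersen graph. -/
def myc (v : PV) : Fin 5 :=
  if v.1 = {0,1} then 0 else if v.1 = {0,2} then 0 else if v.1 = {0,3} then 1
  else if v.1 = {0,4} then 2 else if v.1 = {1,2} then 3 else if v.1 = {1,3} then 1
  else if v.1 = {1,4} then 3 else if v.1 = {2,3} then 4 else if v.1 = {2,4} then 4
  else 2

lemma upper {l : ℕ} (c : PV → Fin l) (hs : Function.Surjective c)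
    (hc : ∀ i j : Fin l, i ≠ j → ∃ u v, (kneser 5 2).Adj u v ∧ c u = i ∧ c v = j) :
    l ≤ 5 := by
  by_contra h
  push_neg at h
  set S : Fin l → Finset PV := fun i => univ.filter (fun v => c v = i) with hS
  have hclass : ∀ i, 2 ≤ (S i).card := by
    intro i
    by_contra hlt
    push_neg at hlt
    obtain ⟨v0, hv0⟩ := hs i
    have hv0S : v0 ∈ S i := by simp [hS, hv0]
    have hpos : 0 < (S i).card := card_pos.mpr ⟨v0, hv0S⟩
    have hcard1 : (S i).card = 1 := by omega
    have hSeq : S i = {v0} := by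
      obtain ⟨a, ha⟩ := card_eq_one.mp hcard1
      rw [ha] at hv0S ⊢
      simp at hv0S; subst hv0S; rfl
    have hsub : (univ.erase i) ⊆ ((univ.filter (fun w => (kneser 5 2).Adj v0 w)).image c) := by
      intro j hj
      have hji : j ≠ i := (mem_erase.mp hj).1
      obtain ⟨u, w, hadj, hcu, hcw⟩ := hc i j hji.symm
      have huS : u ∈ S i := by simp [hS, hcu]
      rw [hSeq] at huS
      have : u = v0 := by simpa using huS
      subst this
      exact mem_image.mpr ⟨w, mem_filter.mpr ⟨mem_univ _, hadj⟩, hcw⟩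
    have h1 := card_le_card hsub
    have h2 := card_image_le (s := univ.filter (fun w => (kneser 5 2).Adj v0 w)) (f := c)
    rw [degPV v0] at h2
    rw [card_erase_of_mem (mem_univ i), card_univ, Fintype.card_fin] at h1
    omega
  have hsum : ∑ i : Fin l, (S i).card = 10 := by
    rw [← cardPV, ← card_univ]
    exact (card_eq_sum_card_fiberwise (fun x _ => mem_univ (c x))).symm
  have : 2 * l ≤ 10 := by
    calc 2 * l = ∑ _i : Fin l, 2 := by simp [mul_comm]
    _ ≤ ∑ i : Fin l, (S i).card := Finset.sum_le_sum (fun i _ => hclass i)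
    _ = 10 := hsum
  omega

/-- The achromatic number of the Kneser graph K(5,2) (the Petersen graph) equals 5. -/
theorem achromatic_kneser_5_2 : IsGreatest (achromaticSet (kneser 5 2)) 5 := by
  constructor
  · refine ⟨myc, ?_, ?_, ?_⟩
    · unfold IsProperColoring; decide
    · decide
    · decide
  · rintro l ⟨c, _, hs, hc⟩
    exact upper c hs hc
end

section
/- For n ≥ 7, the pseudoachromatic number of the Kneser graph K(n,2) is at most ⌊(binomial(n,2) + ⌊n/2⌋)/2⌋. -/
open Finset

/-- For n ≥ 7, the pseudoachromatic number of K(n,2) is at most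
⌊(C(n,2) + ⌊n/2⌋)/2⌋. -/
theorem pseudoachromatic_kneser_upper (n : ℕ) (hn : 7 ≤ n)
    (l : ℕ) (hl : l ∈ pseudoachromaticSet (kneser n 2)) :
    l ≤ (n.choose 2 + n / 2) / 2 := by
  obtain ⟨c, hsurj, hcomp⟩ := hl
  classical
  set fib : Fin l → Finset {s : Finset (Fin n) // s.card = 2} :=
    fun i => Finset.univ.filter (fun v => c v = i) with hfibdef
  have hfib1 : ∀ i, 1 ≤ (fib i).card := by
    intro i
    obtain ⟨v, hv⟩ := hsurj i
    exact Finset.card_pos.mpr ⟨v, by simp [hfibdef, hv]⟩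
  set S := Finset.univ.filter (fun i : Fin l => (fib i).card = 1) with hSdef
  -- choose the unique vertex in each singleton fiber
  have hsingle : ∀ i ∈ S, ∃ v, fib i = {v} := by
    intro i hi
    rw [hSdef, Finset.mem_filter] at hi
    exact Finset.card_eq_one.mp hi.2
  have hne : Nonempty {s : Finset (Fin n) // s.card = 2} := by
    refine ⟨⟨{⟨0, by omega⟩, ⟨1, by omega⟩}, ?_⟩⟩
    rw [Finset.card_insert_of_notMem (by simp), Finset.card_singleton]
  choose! w hw using hsingle
  have hwmem : ∀ i ∈ S, c (w i) = i := by
    intro i hi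
    have : w i ∈ fib i := by rw [hw i hi]; exact Finset.mem_singleton_self _
    simpa [hfibdef] using this
  have hdisj : ∀ i ∈ S, ∀ j ∈ S, i ≠ j → Disjoint (w i).1 (w j).1 := by
    intro i hi j hj hij
    obtain ⟨u, v, hadj, hcu, hcv⟩ := hcomp i j hij
    have hu : u = w i := by
      have : u ∈ fib i := by simp [hfibdef, hcu]
      rw [hw i hi] at this; exact Finset.mem_singleton.mp this
    have hv : v = w j := by
      have : v ∈ fib j := by simp [hfibdef, hcv]
      rw [hw j hj] at this; exact Finset.mem_singleton.mp this
    rw [← hu, ← hv]; exact hadj.2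
  -- bound |S| ≤ n / 2
  have hScard : 2 * S.card ≤ n := by
    have hdisj' : ∀ i ∈ S, ∀ j ∈ S, i ≠ j → Disjoint (w i).1 (w j).1 := hdisj
    have hcard : (S.biUnion (fun i => (w i).1)).card = ∑ i ∈ S, (w i).1.card :=
      Finset.card_biUnion hdisj'
    have hsum : ∑ i ∈ S, (w i).1.card = 2 * S.card := by
      rw [Finset.sum_congr rfl (fun i _ => (w i).2)]
      simp [mul_comm]
    have hle : (S.biUnion (fun i => (w i).1)).card ≤ Fintype.card (Fin n) :=
      Finset.card_le_univ _ |>.trans (by simp)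
    simp only [Fintype.card_fin] at hle
    omega
  have hSn : S.card ≤ n / 2 := by omega
  -- count vertices
  have hV : Fintype.card {s : Finset (Fin n) // s.card = 2} = n.choose 2 := by
    rw [Fintype.card_finset_len, Fintype.card_fin]
  have hsumfib : ∑ i : Fin l, (fib i).card = n.choose 2 := by
    rw [← hV, ← Finset.card_univ]
    rw [Finset.card_eq_sum_card_fiberwise (f := c) (t := Finset.univ)
      (fun x _ => Finset.mem_univ _)]
  have hbig : ∀ i ∈ Finset.univ \ S, 2 ≤ (fib i).card := by
    intro i hi
    rw [Finset.mem_sdiff, hSdef, Finset.mem_filter] at hi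
    have := hfib1 i
    have h1 : (fib i).card ≠ 1 := fun h => hi.2 ⟨Finset.mem_univ _, h⟩
    omega
  have hsplit : ∑ i : Fin l, (fib i).card =
      ∑ i ∈ S, (fib i).card + ∑ i ∈ Finset.univ \ S, (fib i).card := by
    exact ((Finset.sum_sdiff (Finset.subset_univ S)).symm).trans (add_comm _ _)
  have h1 : S.card ≤ ∑ i ∈ S, (fib i).card :=
    Finset.card_nsmul_le_sum S _ 1 (fun i _ => hfib1 i) |>.trans_eq' (by simp)
  have h2 : 2 * (Finset.univ \ S).card ≤ ∑ i ∈ Finset.univ \ S, (fib i).card := by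
    have := Finset.card_nsmul_le_sum (Finset.univ \ S) (fun i => (fib i).card) 2 hbig
    simpa [mul_comm] using this
  have hcardsd : (Finset.univ \ S).card = l - S.card := by
    rw [Finset.card_sdiff_of_subset (Finset.subset_univ S)]
    simp
  have hSl : S.card ≤ l := (Finset.card_le_univ S).trans (by simp)
  have : 2 * l ≤ n.choose 2 + n / 2 := by omega
  omega
end

section
/- For n ≥ 7, the pseudoachromatic number of the Kneser graph K(n,2) is at least ⌊binomial(n,2)/2⌋. -/
open Finset

set_option linter.unusedSectionVars false
open Finset

structure PairSystem (n : ℕ) (ι : Type) where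
  u : ι → Finset (Fin n)
  v : ι → Finset (Fin n)
  cu : ∀ i, (u i).card = 2
  cv : ∀ i, (v i).card = 2
  duv : ∀ i, Disjoint (u i) (v i)
  uinj : ∀ i j, u i = u j → i = j
  vinj : ∀ i j, v i = v j → i = j
  uv : ∀ i j, u i ≠ v j
  unions : ∀ i j, u i ∪ v i = u j ∪ v j → i = j

section Step
variable {n : ℕ} [NeZero n]

/-- embedding of old vertices -/
def emb (n : ℕ) : Fin n ↪ Fin (n + 2) := Fin.castLEEmb (by omega)

/-- the two new vertices -/
def vA (n : ℕ) : Fin (n + 2) := ⟨n, by omega⟩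
def vB (n : ℕ) : Fin (n + 2) := ⟨n + 1, by omega⟩

/-- old-index of new vertices, from ZMod n -/
def gz (z : ZMod n) : Fin (n + 2) := ⟨z.val, by have := ZMod.val_lt z; omega⟩

lemma emb_val (x : Fin n) : ((emb n) x).val = x.val := rfl
lemma gz_val (z : ZMod n) : (gz z).val = z.val := rfl
lemma gz_lt (z : ZMod n) : (gz z).val < n := ZMod.val_lt z

lemma gz_inj : Function.Injective (gz (n := n)) := by
  intro x y h
  exact ZMod.val_injective n (by simpa [gz, Fin.ext_iff] using h)

lemma vA_not_mem_map (s : Finset (Fin n)) : vA n ∉ s.map (emb n) := by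
  intro h
  obtain ⟨x, -, hx⟩ := Finset.mem_map.1 h
  have := congrArg Fin.val hx
  rw [emb_val] at this
  have := x.isLt
  simp [vA] at *; omega

lemma vB_not_mem_map (s : Finset (Fin n)) : vB n ∉ s.map (emb n) := by
  intro h
  obtain ⟨x, -, hx⟩ := Finset.mem_map.1 h
  have := congrArg Fin.val hx
  rw [emb_val] at this
  have := x.isLt
  simp [vB] at *; omega

lemma vA_ne_vB : vA n ≠ vB n := by simp [vA, vB, Fin.ext_iff]
lemma vA_ne_gz (z : ZMod n) : vA n ≠ gz z := by
  intro h
  have h2 := congrArg Fin.val h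
  rw [gz_val] at h2
  have := ZMod.val_lt z
  simp [vA] at h2
  omega
lemma vB_ne_gz (z : ZMod n) : vB n ≠ gz z := by
  intro h
  have h2 := congrArg Fin.val h
  rw [gz_val] at h2
  have := ZMod.val_lt z
  simp [vB] at h2
  omega
lemma gz_not_mem_map (z : ZMod n) (s : Finset (Fin n)) (hz : ∀ x ∈ s, (x : ℕ) ≠ z.val) :
    gz z ∉ s.map (emb n) := by
  intro h
  obtain ⟨x, hxs, hx⟩ := Finset.mem_map.1 h
  exact hz x hxs (by simpa [gz, emb_val, Fin.ext_iff] using congrArg Fin.val hx)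

variable {ι : Type} (S : PairSystem n ι) (k : ZMod n)

def stepU : ι ⊕ ZMod n → Finset (Fin (n + 2))
  | .inl i => (S.u i).map (emb n)
  | .inr z => {vA n, gz z}

def stepV : ι ⊕ ZMod n → Finset (Fin (n + 2))
  | .inl i => (S.v i).map (emb n)
  | .inr z => {vB n, gz (z + k)}

lemma mem_map_val_lt {x : Fin (n+2)} {s : Finset (Fin n)} (h : x ∈ s.map (emb n)) :
    x.val < n := by
  obtain ⟨y, -, hy⟩ := Finset.mem_map.1 h
  have := y.isLt
  simpa [← hy, emb_val] using this

def stepPS (hk : k ≠ 0) (hk2 : k + k ≠ 0) : PairSystem (n + 2) (ι ⊕ ZMod n) where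
  u := stepU S
  v := stepV S k
  cu := by
    rintro (i | z)
    · simp [stepU, S.cu i]
    · simp [stepU, Finset.card_insert_of_notMem, vA_ne_gz]
  cv := by
    rintro (i | z)
    · simp [stepV, S.cv i]
    · simp [stepV, Finset.card_insert_of_notMem, vB_ne_gz]
  duv := by
    rintro (i | z)
    · simpa [stepU, stepV, Finset.disjoint_map] using S.duv i
    · simp only [stepU, stepV]
      rw [Finset.disjoint_left]
      intro x hx hx'
      simp only [Finset.mem_insert, Finset.mem_singleton] at hx hx'
      rcases hx with rfl | rfl <;> rcases hx' with h | h
      · exact vA_ne_vB h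
      · exact vA_ne_gz _ h
      · exact vB_ne_gz _ h.symm
      · exact hk (left_eq_add.mp (gz_inj (n := n) h))
  uinj := by
    rintro (i | z) (j | w) h <;> simp only [stepU] at h
    · exact congrArg Sum.inl (S.uinj i j (Finset.map_injective _ h))
    · exfalso
      have : vA n ∈ (S.u i).map (emb n) := by rw [h]; simp
      exact vA_not_mem_map _ this
    · exfalso
      have : vA n ∈ (S.u j).map (emb n) := by rw [← h]; simp
      exact vA_not_mem_map _ this
    · have : gz z ∈ ({vA n, gz w} : Finset (Fin (n+2))) := h ▸ (by simp)
      simp only [Finset.mem_insert, Finset.mem_singleton] at this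
      rcases this with h' | h'
      · exact absurd h'.symm (vA_ne_gz z)
      · exact congrArg Sum.inr (gz_inj h')
  vinj := by
    rintro (i | z) (j | w) h <;> simp only [stepV] at h
    · exact congrArg Sum.inl (S.vinj i j (Finset.map_injective _ h))
    · exfalso
      have : vB n ∈ (S.v i).map (emb n) := by rw [h]; simp
      exact vB_not_mem_map _ this
    · exfalso
      have : vB n ∈ (S.v j).map (emb n) := by rw [← h]; simp
      exact vB_not_mem_map _ this
    · have : gz (z + k) ∈ ({vB n, gz (w + k)} : Finset (Fin (n+2))) := h ▸ (by simp)
      simp only [Finset.mem_insert, Finset.mem_singleton] at this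
      rcases this with h' | h'
      · exact absurd h'.symm (vB_ne_gz _)
      · exact congrArg Sum.inr (add_right_cancel (gz_inj h'))
  uv := by
    rintro (i | z) (j | w) h <;> simp only [stepU, stepV] at h
    · exact S.uv i j (Finset.map_injective _ h)
    · exact vB_not_mem_map (S.u i) (by rw [h]; simp)
    · exact vA_not_mem_map (S.v j) (by rw [← h]; simp)
    · have : vA n ∈ ({vB n, gz (w + k)} : Finset (Fin (n+2))) := h ▸ (by simp)
      simp only [Finset.mem_insert, Finset.mem_singleton] at this
      rcases this with h' | h'
      · exact vA_ne_vB h'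
      · exact vA_ne_gz _ h'
  unions := by
    have notmem : ∀ (s t : Finset (Fin n)) (x : Fin (n+2)), n ≤ x.val →
        x ∉ s.map (emb n) ∪ t.map (emb n) := by
      intro s t x hx h
      rcases Finset.mem_union.1 h with h | h <;>
        exact absurd (mem_map_val_lt h) (by omega)
    rintro (i | z) (j | w) h <;> simp only [stepU, stepV] at h
    · rw [← Finset.map_union, ← Finset.map_union] at h
      exact congrArg Sum.inl (S.unions i j (Finset.map_injective _ h))
    · have : vA n ∈ (S.u i).map (emb n) ∪ (S.v i).map (emb n) := by
        rw [h]; simp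
      exact absurd this (notmem _ _ _ (by simp [vA]))
    · have : vA n ∈ (S.u j).map (emb n) ∪ (S.v j).map (emb n) := by
        rw [← h]; simp
      exact absurd this (notmem _ _ _ (by simp [vA]))
    · have hmem : ∀ y : ZMod n, gz y ∈ ({vA n, gz w} : Finset (Fin (n+2))) ∪ {vB n, gz (w + k)} →
          y = w ∨ y = w + k := by
        intro y hy
        simp only [Finset.mem_union, Finset.mem_insert, Finset.mem_singleton] at hy
        rcases hy with (h' | h') | (h' | h')
        · exact absurd h'.symm (vA_ne_gz y)
        · exact Or.inl (gz_inj h')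
        · exact absurd h'.symm (vB_ne_gz y)
        · exact Or.inr (gz_inj h')
      have h1 : z = w ∨ z = w + k := hmem z (by rw [← h]; simp)
      have h2 : z + k = w ∨ z + k = w + k := hmem (z + k) (by rw [← h]; simp)
      rcases h1 with rfl | rfl
      · rfl
      · exfalso
        rcases h2 with h2 | h2
        · exact hk2 (by rwa [add_assoc, add_eq_left] at h2)
        · exact hk (by rwa [add_left_inj, add_eq_left] at h2)
end Step
lemma subset_of_meets {n : ℕ} (x p q : Finset (Fin n)) (hx : x.card = 2)
    (hpq : Disjoint p q) (h1 : ¬ Disjoint x p) (h2 : ¬ Disjoint x q) : x ⊆ p ∪ q := by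
  rw [Finset.not_disjoint_iff] at h1 h2
  obtain ⟨a, hax, hap⟩ := h1
  obtain ⟨b, hbx, hbq⟩ := h2
  have hab : a ≠ b := by
    rintro rfl
    exact (Finset.disjoint_left.1 hpq) hap hbq
  have hsub : ({a, b} : Finset (Fin n)) ⊆ x := by
    intro t ht; simp at ht; rcases ht with rfl | rfl <;> assumption
  have : x = {a, b} := by
    refine (Finset.eq_of_subset_of_card_le hsub ?_).symm
    rw [hx, Finset.card_insert_of_notMem (by simpa using hab), Finset.card_singleton]
  subst this
  intro t ht; simp at ht
  rcases ht with rfl | rfl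
  · exact Finset.mem_union_left _ hap
  · exact Finset.mem_union_right _ hbq

lemma pairSystem_complete {n l : ℕ} (hl : 0 < l) (S : PairSystem n (Fin l)) :
    l ∈ pseudoachromaticSet (kneser n 2) := by
  classical
  set V := {s : Finset (Fin n) // s.card = 2}
  have uniq : ∀ (w : Finset (Fin n)) (i j : Fin l),
      (S.u i = w ∨ S.v i = w) → (S.u j = w ∨ S.v j = w) → i = j := by
    rintro w i j (rfl | rfl) hj
    · rcases hj with h | h
      · exact (S.uinj j i h).symm
      · exact absurd h.symm (S.uv i j)
    · rcases hj with h | h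
      · exact absurd h (S.uv j i)
      · exact (S.vinj j i h).symm
  let c : V → Fin l := fun w =>
    if h : ∃ i, S.u i = w.1 ∨ S.v i = w.1 then h.choose else ⟨0, hl⟩
  have hcu : ∀ i, c ⟨S.u i, S.cu i⟩ = i := by
    intro i
    have h : ∃ j, S.u j = S.u i ∨ S.v j = S.u i := ⟨i, Or.inl rfl⟩
    simp only [c, dif_pos h]
    exact uniq (S.u i) h.choose i h.choose_spec (Or.inl rfl)
  have hcv : ∀ i, c ⟨S.v i, S.cv i⟩ = i := by
    intro i
    have h : ∃ j, S.u j = S.v i ∨ S.v j = S.v i := ⟨i, Or.inr rfl⟩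
    simp only [c, dif_pos h]
    exact uniq (S.v i) h.choose i h.choose_spec (Or.inr rfl)
  refine ⟨c, fun i => ⟨⟨S.u i, S.cu i⟩, hcu i⟩, ?_⟩
  intro i j hij
  -- find a cross disjoint pair
  have key : (Disjoint (S.u i) (S.u j) ∨ Disjoint (S.u i) (S.v j)) ∨
      (Disjoint (S.v i) (S.u j) ∨ Disjoint (S.v i) (S.v j)) := by
    by_contra h
    push_neg at h
    obtain ⟨⟨h1, h2⟩, h3, h4⟩ := h
    have su : S.u i ⊆ S.u j ∪ S.v j := subset_of_meets _ _ _ (S.cu i) (S.duv j) h1 h2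
    have sv : S.v i ⊆ S.u j ∪ S.v j := subset_of_meets _ _ _ (S.cv i) (S.duv j) h3 h4
    have hsub : S.u i ∪ S.v i ⊆ S.u j ∪ S.v j := Finset.union_subset su sv
    have hci : (S.u i ∪ S.v i).card = 4 := by
      rw [Finset.card_union_of_disjoint (S.duv i), S.cu i, S.cv i]
    have hcj : (S.u j ∪ S.v j).card = 4 := by
      rw [Finset.card_union_of_disjoint (S.duv j), S.cu j, S.cv j]
    exact hij (S.unions i j (Finset.eq_of_subset_of_card_le hsub (by omega)))
  have mkadj : ∀ (x y : Finset (Fin n)) (hx : x.card = 2) (hy : y.card = 2),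
      Disjoint x y → (kneser n 2).Adj ⟨x, hx⟩ ⟨y, hy⟩ := by
    intro x y hx hy hd
    show (⟨x, hx⟩ : {s : Finset (Fin n) // s.card = 2}) ≠ ⟨y, hy⟩ ∧ Disjoint x y
    refine ⟨?_, hd⟩
    intro h
    have : x = y := congrArg Subtype.val h
    subst this
    have : x = ∅ := by simpa using hd
    simp [this] at hx
  rcases key with (h | h) | (h | h)
  · exact ⟨_, _, mkadj _ _ (S.cu i) (S.cu j) h, hcu i, hcu j⟩
  · exact ⟨_, _, mkadj _ _ (S.cu i) (S.cv j) h, hcu i, hcv j⟩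
  · exact ⟨_, _, mkadj _ _ (S.cv i) (S.cu j) h, hcv i, hcu j⟩
  · exact ⟨_, _, mkadj _ _ (S.cv i) (S.cv j) h, hcv i, hcv j⟩

def PairSystem.reindex {n : ℕ} {ι κ : Type} (S : PairSystem n ι) (e : κ ≃ ι) :
    PairSystem n κ where
  u := S.u ∘ e
  v := S.v ∘ e
  cu i := S.cu (e i)
  cv i := S.cv (e i)
  duv i := S.duv (e i)
  uinj i j h := e.injective (S.uinj _ _ h)
  vinj i j h := e.injective (S.vinj _ _ h)
  uv i j := S.uv (e i) (e j)
  unions i j h := e.injective (S.unions _ _ h)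

def PairSystem.extend {n : ℕ} {ι : Type} (S : PairSystem n ι) (p q : Finset (Fin n))
    (hp : p.card = 2) (hq : q.card = 2) (hpq : Disjoint p q)
    (hpu : ∀ i, p ≠ S.u i) (hpv : ∀ i, p ≠ S.v i)
    (hqu : ∀ i, q ≠ S.u i) (hqv : ∀ i, q ≠ S.v i)
    (hun : ∀ i, p ∪ q ≠ S.u i ∪ S.v i) : PairSystem n (Option ι) where
  u o := o.elim p S.u
  v o := o.elim q S.v
  cu o := by cases o <;> simp [hp, S.cu]
  cv o := by cases o <;> simp [hq, S.cv]
  duv o := by cases o <;> simp [hpq, S.duv]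
  uinj o o' h := by
    match o, o' with
    | none, none => rfl
    | none, some j => exact absurd h (hpu j)
    | some i, none => exact absurd h.symm (hpu i)
    | some i, some j => exact congrArg some (S.uinj i j h)
  vinj o o' h := by
    match o, o' with
    | none, none => rfl
    | none, some j => exact absurd h (hqv j)
    | some i, none => exact absurd h.symm (hqv i)
    | some i, some j => exact congrArg some (S.vinj i j h)
  uv o o' := by
    match o, o' with
    | none, none =>
      intro h
      have h' : p = q := h
      have h2 : Disjoint q q := h' ▸ hpq
      have hq0 : q = ∅ := Finset.eq_empty_of_forall_notMem
        fun x hx => (Finset.disjoint_left.1 h2) hx hx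
      rw [h', hq0] at hp
      simp at hp
    | none, some j => exact hpv j
    | some i, none => exact fun h => hqu i h.symm
    | some i, some j => exact S.uv i j
  unions o o' h := by
    match o, o' with
    | none, none => rfl
    | none, some j => exact absurd h (hun j)
    | some i, none => exact absurd h.symm (hun i)
    | some i, some j => exact congrArg some (S.unions i j h)

lemma exists_leftover {n : ℕ} {ι : Type} [Fintype ι] (S : PairSystem n ι)
    (h : 2 * Fintype.card ι < n.choose 2) :
    ∃ e : Finset (Fin n), e.card = 2 ∧ (∀ i, e ≠ S.u i) ∧ (∀ i, e ≠ S.v i) := by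
  classical
  have hT : ((Finset.univ.image S.u) ∪ (Finset.univ.image S.v)).card ≤ 2 * Fintype.card ι := by
    have h1 := Finset.card_union_le (Finset.univ.image S.u) (Finset.univ.image S.v)
    have h2 := Finset.card_image_le (s := (Finset.univ : Finset ι)) (f := S.u)
    have h3 := Finset.card_image_le (s := (Finset.univ : Finset ι)) (f := S.v)
    simp only [Finset.card_univ] at h2 h3
    omega
  have hP : ((Finset.univ : Finset (Fin n)).powersetCard 2).card = n.choose 2 := by
    rw [Finset.card_powersetCard]
    simp
  have hns : ¬ ((Finset.univ : Finset (Fin n)).powersetCard 2 ⊆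
      (Finset.univ.image S.u) ∪ (Finset.univ.image S.v)) := by
    intro hsub
    have := Finset.card_le_card hsub
    omega
  obtain ⟨e, he, heT⟩ := Finset.not_subset.1 hns
  refine ⟨e, (Finset.mem_powersetCard.1 he).2, ?_, ?_⟩
  · intro i hi
    exact heT (Finset.mem_union_left _ (Finset.mem_image.2 ⟨i, Finset.mem_univ i, hi.symm⟩))
  · intro i hi
    exact heT (Finset.mem_union_right _ (Finset.mem_image.2 ⟨i, Finset.mem_univ i, hi.symm⟩))

lemma small_ne_zero {n : ℕ} [NeZero n] {m : ℕ} (h1 : 0 < m) (h2 : m < n) :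
    ((m : ℕ) : ZMod n) ≠ 0 := by
  intro h
  have := congrArg ZMod.val h
  rw [ZMod.val_cast_of_lt h2, ZMod.val_zero] at this
  omega

lemma exists_k {n : ℕ} (hn : 7 ≤ n) (c d : ZMod n) (hcd : c ≠ d) :
    ∃ k : ZMod n, k ≠ 0 ∧ k + k ≠ 0 ∧ c + k ≠ d ∧ d + k ≠ c := by
  haveI : NeZero n := ⟨by omega⟩
  have h1 : (1 : ZMod n) ≠ 0 := by
    simpa using small_ne_zero (n := n) (m := 1) (by omega) (by omega)
  have h2 : (2 : ZMod n) ≠ 0 := by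
    simpa using small_ne_zero (n := n) (m := 2) (by omega) (by omega)
  have h3 : (3 : ZMod n) ≠ 0 := by
    simpa using small_ne_zero (n := n) (m := 3) (by omega) (by omega)
  have h4 : (4 : ZMod n) ≠ 0 := by
    simpa using small_ne_zero (n := n) (m := 4) (by omega) (by omega)
  by_cases hA : c + 1 = d
  · refine ⟨2, h2, by
      intro h; exact h4 (by linear_combination h), ?_, ?_⟩
    · intro h
      exact h1 (by linear_combination h - hA)
    · intro h
      exact h3 (by linear_combination h + hA)
  · by_cases hB : d + 1 = c
    · refine ⟨2, h2, by
        intro h; exact h4 (by linear_combination h), ?_, ?_⟩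
      · intro h
        exact h3 (by linear_combination h + hB)
      · intro h
        exact h1 (by linear_combination h - hB)
    · exact ⟨1, h1, fun h => h2 (by linear_combination h), hA, hB⟩

def HasPS (n : ℕ) : Prop := ∃ (ι : Type) (_ : Fintype ι),
  Fintype.card ι = n.choose 2 / 2 ∧ Nonempty (PairSystem n ι)

lemma choose2_step (n : ℕ) : (n + 2).choose 2 = n.choose 2 + 2 * n + 1 := by
  simp [Nat.choose_succ_succ, Nat.choose_one_right]
  omega

lemma gz_mem_pair {n : ℕ} [NeZero n] {y : ZMod n} {c d : Fin n}
    (h : gz y ∈ ({c, d} : Finset (Fin n)).map (emb n)) :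
    y = ((c.val : ℕ) : ZMod n) ∨ y = ((d.val : ℕ) : ZMod n) := by
  obtain ⟨x, hxs, hx⟩ := Finset.mem_map.1 h
  have hval : (x : ℕ) = y.val := by
    simpa [gz, emb, Fin.ext_iff] using congrArg Fin.val hx
  simp only [Finset.mem_insert, Finset.mem_singleton] at hxs
  have : y = ((x.val : ℕ) : ZMod n) := by
    apply ZMod.val_injective
    rw [ZMod.val_cast_of_lt x.isLt]
    omega
  rcases hxs with rfl | rfl
  · exact Or.inl this
  · exact Or.inr this

lemma hasPS_step {n : ℕ} (hn : 7 ≤ n) (h : HasPS n) : HasPS (n + 2) := by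
  haveI : NeZero n := ⟨by omega⟩
  obtain ⟨ι, ft, hcard, ⟨S⟩⟩ := h
  have hch := choose2_step n
  have hzc : Fintype.card (ZMod n) = n := ZMod.card n
  by_cases hpar : n.choose 2 % 2 = 0
  · -- even case
    have h1 : (1 : ZMod n) ≠ 0 := by
      simpa using small_ne_zero (n := n) (m := 1) (by omega) (by omega)
    have h2 : (1 : ZMod n) + 1 ≠ 0 := by
      intro h
      exact small_ne_zero (n := n) (m := 2) (by omega) (by omega) (by push_cast; linear_combination h)
    refine ⟨ι ⊕ ZMod n, inferInstance, ?_, ⟨stepPS S 1 h1 h2⟩⟩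
    rw [Fintype.card_sum, hcard, hzc, hch]
    omega
  · -- odd case
    obtain ⟨e, he2, heu, hev⟩ := exists_leftover S (by omega)
    obtain ⟨c, d, hcd, rfl⟩ := Finset.card_eq_two.1 he2
    set zc : ZMod n := ((c.val : ℕ) : ZMod n) with hzcdef
    set zd : ZMod n := ((d.val : ℕ) : ZMod n) with hzddef
    have hvzc : zc.val = c.val := ZMod.val_cast_of_lt c.isLt
    have hvzd : zd.val = d.val := ZMod.val_cast_of_lt d.isLt
    have hne : zc ≠ zd := by
      intro h
      apply hcd
      have := congrArg ZMod.val h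
      rw [hvzc, hvzd] at this
      exact Fin.ext this
    obtain ⟨k, hk0, hkk, hk3, hk4⟩ := exists_k hn zc zd hne
    set T := stepPS S k hk0 hkk with hTdef
    set p : Finset (Fin (n + 2)) := ({c, d} : Finset (Fin n)).map (emb n) with hpdef
    set q : Finset (Fin (n + 2)) := {vA n, vB n} with hqdef
    have hgzp : ∀ y : ZMod n, gz y ∈ p → y = zc ∨ y = zd := fun y hy => gz_mem_pair hy
    have hvAp : vA n ∉ p := vA_not_mem_map _
    have hvBp : vB n ∉ p := vB_not_mem_map _
    have hTu : ∀ x, T.u x = stepU S x := fun _ => rfl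
    have hTv : ∀ x, T.v x = stepV S k x := fun _ => rfl
    refine ⟨Option (ι ⊕ ZMod n), inferInstance, ?_,
      ⟨T.extend p q (by rw [hpdef, Finset.card_map]; exact he2)
        (by rw [hqdef]; rw [Finset.card_insert_of_notMem (by simpa using vA_ne_vB), Finset.card_singleton])
        ?_ ?_ ?_ ?_ ?_ ?_⟩⟩
    · rw [Fintype.card_option, Fintype.card_sum, hcard, hzc, hch]
      omega
    · -- Disjoint p q
      rw [Finset.disjoint_left]
      intro x hxp hxq
      have hlt := mem_map_val_lt hxp
      rw [hqdef] at hxq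
      simp only [Finset.mem_insert, Finset.mem_singleton] at hxq
      rcases hxq with rfl | rfl <;> simp [vA, vB] at hlt
    · -- p ≠ T.u i
      rintro (i | z) h
      · exact heu i (Finset.map_injective _ h)
      · rw [hTu] at h
        have : vA n ∈ p := by rw [h]; simp [stepU]
        exact hvAp this
    · -- p ≠ T.v i
      rintro (i | z) h
      · exact hev i (Finset.map_injective _ h)
      · rw [hTv] at h
        have : vB n ∈ p := by rw [h]; simp [stepV]
        exact hvBp this
    · -- q ≠ T.u i
      rintro (i | z) h
      · rw [hTu] at h
        have : vA n ∈ stepU S (Sum.inl i) := by rw [← h]; simp [hqdef]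
        simp only [stepU] at this
        exact vA_not_mem_map _ this
      · rw [hTu] at h
        have : vB n ∈ stepU S (Sum.inr z) := by rw [← h]; simp [hqdef]
        simp only [stepU, Finset.mem_insert, Finset.mem_singleton] at this
        rcases this with h' | h'
        · exact vA_ne_vB h'.symm
        · exact vB_ne_gz _ h'
    · -- q ≠ T.v i
      rintro (i | z) h
      · rw [hTv] at h
        have : vA n ∈ stepV S k (Sum.inl i) := by rw [← h]; simp [hqdef]
        simp only [stepV] at this
        exact vA_not_mem_map _ this
      · rw [hTv] at h
        have : vA n ∈ stepV S k (Sum.inr z) := by rw [← h]; simp [hqdef]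
        simp only [stepV, Finset.mem_insert, Finset.mem_singleton] at this
        rcases this with h' | h'
        · exact vA_ne_vB h'
        · exact vA_ne_gz _ h'
    · -- unions
      rintro (i | z) h
      · have : vA n ∈ stepU S (Sum.inl i) ∪ stepV S k (Sum.inl i) := by
          rw [hTu, hTv] at h
          rw [← h]
          simp [hqdef]
        simp only [stepU, stepV] at this
        rcases Finset.mem_union.1 this with h' | h' <;>
          · have := mem_map_val_lt h'
            simp [vA] at this
      · rw [hTu, hTv] at h
        simp only [stepU, stepV] at h
        have hmm : ∀ y : ZMod n, gz y ∈ p ∪ q → y = zc ∨ y = zd := by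
          intro y hy
          rcases Finset.mem_union.1 hy with h' | h'
          · exact hgzp y h'
          · rw [hqdef] at h'
            simp only [Finset.mem_insert, Finset.mem_singleton] at h'
            rcases h' with h' | h'
            · exact absurd h'.symm (vA_ne_gz y)
            · exact absurd h'.symm (vB_ne_gz y)
        have hz1 : z = zc ∨ z = zd := by
          apply hmm
          rw [h]
          simp
        have hz2 : z + k = zc ∨ z + k = zd := by
          apply hmm
          rw [h]
          simp
        rcases hz1 with rfl | rfl
        · rcases hz2 with h' | h'
          · exact hk0 (by rwa [add_eq_left] at h')
          · exact hk3 h'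
        · rcases hz2 with h' | h'
          · exact hk4 h'
          · exact hk0 (by rwa [add_eq_left] at h')

def u7 : Fin 10 → Finset (Fin 7) :=
  ![{1,5}, {3,6}, {2,4}, {0,6}, {0,3}, {2,3}, {4,6}, {2,5}, {1,4}, {2,6}]
def v7 : Fin 10 → Finset (Fin 7) :=
  ![{3,4}, {4,5}, {5,6}, {1,3}, {1,2}, {1,6}, {0,2}, {0,4}, {0,5}, {0,1}]
def u8 : Fin 14 → Finset (Fin 8) :=
  ![{3,5}, {0,5}, {1,7}, {5,6}, {2,4}, {4,7}, {1,4}, {0,1}, {2,6}, {0,3}, {6,7}, {0,4}, {3,7}, {1,5}]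
def v8 : Fin 14 → Finset (Fin 8) :=
  ![{0,2}, {3,4}, {0,6}, {2,7}, {5,7}, {3,6}, {2,5}, {4,6}, {1,3}, {1,6}, {4,5}, {2,3}, {1,2}, {0,7}]

lemma hasPS7 : HasPS 7 := by
  refine ⟨Fin 10, inferInstance, by norm_num [Nat.choose], ⟨⟨u7, v7, ?_, ?_, ?_, ?_, ?_, ?_, ?_⟩⟩⟩ <;> decide

lemma hasPS8 : HasPS 8 := by
  refine ⟨Fin 14, inferInstance, by norm_num [Nat.choose], ⟨⟨u8, v8, ?_, ?_, ?_, ?_, ?_, ?_, ?_⟩⟩⟩ <;> decide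

lemma hasPS_all (m : ℕ) : HasPS (7 + m) := by
  induction m using Nat.strong_induction_on with
  | _ m ih =>
    match m with
    | 0 => exact hasPS7
    | 1 => exact hasPS8
    | (j + 2) =>
      have h := hasPS_step (n := 7 + j) (by omega) (ih j (by omega))
      have heq : 7 + (j + 2) = (7 + j) + 2 := by omega
      rwa [heq]

theorem pseudoachromatic_kneser_lower' (n : ℕ) (hn : 7 ≤ n) :
    n.choose 2 / 2 ∈ pseudoachromaticSet (kneser n 2) := by
  have h := hasPS_all (n - 7)
  rw [show 7 + (n - 7) = n from by omega] at h
  obtain ⟨ι, ft, hcard, ⟨S⟩⟩ := h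
  have hl : 0 < n.choose 2 / 2 := by
    have h21 : (7 : ℕ).choose 2 ≤ n.choose 2 := Nat.choose_le_choose 2 hn
    norm_num [Nat.choose] at h21
    omega
  exact pairSystem_complete hl (S.reindex (Fintype.equivFinOfCardEq hcard).symm)

/-- For n ≥ 7, the pseudoachromatic number of K(n,2) is at least ⌊C(n,2)/2⌋:
there is a complete coloring with that many colors. -/
theorem pseudoachromatic_kneser_lower (n : ℕ) (hn : 7 ≤ n) :
    n.choose 2 / 2 ∈ pseudoachromaticSet (kneser n 2) :=
  pseudoachromatic_kneser_lower' n hn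
end

section
/- The pseudoachromatic number of the Kneser graph K(n,2) equals its achromatic number for 2 ≤ n ≤ 6; in particular ψ(K(4,2)) = 3, ψ(K(5,2)) = 5, and ψ(K(6,2)) = 7. -/
open Finset

instance (n k : ℕ) : DecidableRel (kneser n k).Adj :=
  fun x y => inferInstanceAs (Decidable (x ≠ y ∧ Disjoint x.1 y.1))

instance {V : Type*} [Fintype V] (G : SimpleGraph V) [DecidableRel G.Adj] {l : ℕ}
    (c : V → Fin l) : Decidable (IsProperColoring G c) := by
  unfold IsProperColoring; infer_instance

instance {V : Type*} [Fintype V] [DecidableEq V] (G : SimpleGraph V) [DecidableRel G.Adj] {l : ℕ}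
    (c : V → Fin l) : Decidable (IsCompleteColoring G c) := by
  unfold IsCompleteColoring Function.Surjective; infer_instance

lemma ach_subset_pseudo {V : Type*} (G : SimpleGraph V) :
    achromaticSet G ⊆ pseudoachromaticSet G := fun _ ⟨c, _, hc⟩ => ⟨c, hc⟩

/-- Degree-counting upper bound: if more than half of `2l` exceeds the number of
vertices, some color class is a singleton, whose vertex must see all other
colors among its neighbors. -/
lemma pseudo_upper {V : Type*} [Fintype V] [DecidableEq V] (G : SimpleGraph V)
    [DecidableRel G.Adj] (d l : ℕ) (hd : ∀ v, G.degree v ≤ d)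
    (hl : Fintype.card V < 2 * l) (hmem : l ∈ pseudoachromaticSet G) : l ≤ d + 1 := by
  obtain ⟨c, hsurj, hpair⟩ := hmem
  -- some fiber has at most one element
  have hfib : ∃ i : Fin l, ((univ : Finset V).filter (fun v => c v = i)).card ≤ 1 := by
    by_contra h
    push_neg at h
    have h2 : ∀ i : Fin l, 2 ≤ ((univ : Finset V).filter (fun v => c v = i)).card :=
      fun i => h i
    have hcard : (univ : Finset V).card =
        ∑ i : Fin l, ((univ : Finset V).filter (fun v => c v = i)).card :=
      Finset.card_eq_sum_card_fiberwise (fun x _ => Finset.mem_univ (c x))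
    have : 2 * l ≤ Fintype.card V := by
      calc 2 * l = ∑ _i : Fin l, 2 := by simp [mul_comm]
        _ ≤ ∑ i : Fin l, ((univ : Finset V).filter (fun v => c v = i)).card :=
            Finset.sum_le_sum (fun i _ => h2 i)
        _ = Fintype.card V := hcard.symm
    omega
  obtain ⟨i, hi⟩ := hfib
  obtain ⟨v, hv⟩ := hsurj i
  -- the fiber of i is exactly {v}
  have hv' : ∀ u, c u = i → u = v := by
    intro u hu
    by_contra hne
    have : 2 ≤ ((univ : Finset V).filter (fun w => c w = i)).card := by
      have hsub : ({u, v} : Finset V) ⊆ (univ : Finset V).filter (fun w => c w = i) := by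
        intro x hx
        simp only [Finset.mem_insert, Finset.mem_singleton] at hx
        rcases hx with rfl | rfl <;> simp [hu, hv]
      calc 2 = ({u, v} : Finset V).card := (Finset.card_pair hne).symm
        _ ≤ _ := Finset.card_le_card hsub
    omega
  -- every color other than i appears on a neighbor of v
  have hsub : (univ : Finset (Fin l)).erase i ⊆ (G.neighborFinset v).image c := by
    intro j hj
    have hji : j ≠ i := Finset.ne_of_mem_erase hj
    obtain ⟨u, w, hadj, hcu, hcw⟩ := hpair i j (Ne.symm hji)
    have : u = v := hv' u hcu
    subst this
    exact Finset.mem_image.2 ⟨w, by simp only [SimpleGraph.mem_neighborFinset]; exact hadj, hcw⟩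
  have h1 : l - 1 ≤ ((G.neighborFinset v).image c).card := by
    have := Finset.card_le_card hsub
    simpa [Finset.card_erase_of_mem] using this
  have h2 : ((G.neighborFinset v).image c).card ≤ G.degree v :=
    (Finset.card_image_le).trans_eq (G.card_neighborFinset_eq_degree v)
  have := hd v
  omega

def c4 : {s : Finset (Fin 4) // s.card = 2} → Fin 3 := fun v =>
  if v.1 = {0,1} then 0 else if v.1 = {0,2} then 1 else if v.1 = {0,3} then 2
  else if v.1 = {1,2} then 0 else if v.1 = {1,3} then 2 else 1

def c5 : {s : Finset (Fin 5) // s.card = 2} → Fin 5 := fun v =>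
  if v.1 = {0,1} then 0 else if v.1 = {0,2} then 3 else if v.1 = {0,3} then 4
  else if v.1 = {0,4} then 4 else if v.1 = {1,2} then 3 else if v.1 = {1,3} then 0
  else if v.1 = {1,4} then 1 else if v.1 = {2,3} then 2 else if v.1 = {2,4} then 1
  else 2

def c6 : {s : Finset (Fin 6) // s.card = 2} → Fin 7 := fun v =>
  if v.1 = {0,1} then 5 else if v.1 = {0,2} then 0 else if v.1 = {0,3} then 5
  else if v.1 = {0,4} then 6 else if v.1 = {0,5} then 0 else if v.1 = {1,2} then 1
  else if v.1 = {1,3} then 5 else if v.1 = {1,4} then 4 else if v.1 = {1,5} then 4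
  else if v.1 = {2,3} then 3 else if v.1 = {2,4} then 6 else if v.1 = {2,5} then 1
  else if v.1 = {3,4} then 3 else if v.1 = {3,5} then 2 else 2

lemma mem2 : 1 ∈ achromaticSet (kneser 2 2) :=
  ⟨fun _ => 0, by decide, by decide⟩
lemma mem3 : 1 ∈ achromaticSet (kneser 3 2) :=
  ⟨fun _ => 0, by decide, by decide⟩
lemma mem4 : 3 ∈ achromaticSet (kneser 4 2) := ⟨c4, by decide, by decide⟩
lemma mem5 : 5 ∈ achromaticSet (kneser 5 2) := ⟨c5, by decide, by decide⟩
lemma mem6 : 7 ∈ achromaticSet (kneser 6 2) := ⟨c6, by decide, by decide⟩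

lemma ub2 : ∀ l ∈ pseudoachromaticSet (kneser 2 2), l ≤ 1 := by
  intro l hl
  by_contra h
  have h1 := pseudo_upper (kneser 2 2) 0 l (by decide) ?_ hl
  · omega
  · have : Fintype.card {s : Finset (Fin 2) // s.card = 2} = 1 := by decide
    omega

lemma ub3 : ∀ l ∈ pseudoachromaticSet (kneser 3 2), l ≤ 1 := by
  intro l hl
  by_contra h
  have h1 := pseudo_upper (kneser 3 2) 0 l (by decide) ?_ hl
  · omega
  · have : Fintype.card {s : Finset (Fin 3) // s.card = 2} = 3 := by decide
    omega

lemma ub4 : ∀ l ∈ pseudoachromaticSet (kneser 4 2), l ≤ 3 := by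
  intro l hl
  by_contra h
  have h1 := pseudo_upper (kneser 4 2) 1 l (by decide) ?_ hl
  · omega
  · have : Fintype.card {s : Finset (Fin 4) // s.card = 2} = 6 := by decide
    omega

lemma ub5 : ∀ l ∈ pseudoachromaticSet (kneser 5 2), l ≤ 5 := by
  intro l hl
  by_contra h
  have h1 := pseudo_upper (kneser 5 2) 3 l (by decide) ?_ hl
  · omega
  · have : Fintype.card {s : Finset (Fin 5) // s.card = 2} = 10 := by decide
    omega

lemma ub6 : ∀ l ∈ pseudoachromaticSet (kneser 6 2), l ≤ 7 := by
  intro l hl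
  by_contra h
  have h1 := pseudo_upper (kneser 6 2) 6 l (by decide) ?_ hl
  · omega
  · have : Fintype.card {s : Finset (Fin 6) // s.card = 2} = 15 := by decide
    omega

lemma great (n v : ℕ) (hm : v ∈ achromaticSet (kneser n 2))
    (hub : ∀ l ∈ pseudoachromaticSet (kneser n 2), l ≤ v) :
    IsGreatest (achromaticSet (kneser n 2)) v ∧
      IsGreatest (pseudoachromaticSet (kneser n 2)) v :=
  ⟨⟨hm, fun l hl => hub l (ach_subset_pseudo _ hl)⟩, ⟨ach_subset_pseudo _ hm, hub⟩⟩

/-- The pseudoachromatic number of K(n,2) equals its achromatic number for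
2 ≤ n ≤ 6; in particular ψ(K(4,2)) = 3, ψ(K(5,2)) = 5 and ψ(K(6,2)) = 7. -/
theorem pseudoachromatic_eq_achromatic_small :
    (∀ n, 2 ≤ n → n ≤ 6 → ∀ a p : ℕ,
      IsGreatest (achromaticSet (kneser n 2)) a →
      IsGreatest (pseudoachromaticSet (kneser n 2)) p → p = a) ∧
    IsGreatest (pseudoachromaticSet (kneser 4 2)) 3 ∧
    IsGreatest (pseudoachromaticSet (kneser 5 2)) 5 ∧
    IsGreatest (pseudoachromaticSet (kneser 6 2)) 7 := by
  have g2 := great 2 1 mem2 ub2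
  have g3 := great 3 1 mem3 ub3
  have g4 := great 4 3 mem4 ub4
  have g5 := great 5 5 mem5 ub5
  have g6 := great 6 7 mem6 ub6
  refine ⟨?_, g4.2, g5.2, g6.2⟩
  intro n h2 h6 a p ha hp
  interval_cases n
  · rw [ha.unique g2.1, hp.unique g2.2]
  · rw [ha.unique g3.1, hp.unique g3.2]
  · rw [ha.unique g4.1, hp.unique g4.2]
  · rw [ha.unique g5.1, hp.unique g5.2]
  · rw [ha.unique g6.1, hp.unique g6.2]
end

section
/- Let ς be a complete l-coloring of K(n,k) and let x be the size of a smallest color class. If n − kx ≥ k, then l ≤ 1 + x·binomial(n−k,k) − (x−1)·binomial(n−kx,k). -/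
open Finset

set_option maxHeartbeats 1000000 in
instance kneserAdjDecidable (n k : ℕ) : DecidableRel (kneser n k).Adj :=
  fun a b => inferInstanceAs (Decidable (a ≠ b ∧ Disjoint a.1 b.1))

set_option maxHeartbeats 1000000

/-- If ς is a complete l-coloring of K(n,k) and x is the size of a smallest
color class, with n − kx ≥ k, then
l ≤ 1 + x·C(n−k,k) − (x−1)·C(n−kx,k). -/
theorem pseudoachromatic_kneser_refined_upper (n k l x : ℕ)
    (c : {s : Finset (Fin n) // s.card = k} → Fin l)
    (hc : IsCompleteColoring (kneser n k) c)
    (hx : ∃ i : Fin l, (Finset.univ.filter (fun v => c v = i)).card = x)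
    (hmin : ∀ j : Fin l, x ≤ (Finset.univ.filter (fun v => c v = j)).card)
    (hnk : k + k * x ≤ n) :
    (l : ℤ) ≤ 1 + x * ((n - k).choose k) - (x - 1 : ℤ) * ((n - k * x).choose k) := by
  obtain ⟨i, hXcard⟩ := hx
  have hl1 : 1 ≤ l := i.pos
  -- the case k = 0
  rcases Nat.eq_zero_or_pos k with hk | hk
  · subst hk
    have hl : ∀ j : Fin l, j = i := by
      intro j
      obtain ⟨v, hv⟩ := hc.1 j
      obtain ⟨w, hw⟩ := hc.1 i
      have : v = w := Subtype.ext (by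
        rw [Finset.card_eq_zero.mp v.2, Finset.card_eq_zero.mp w.2])
      rw [← hv, this, hw]
    have hl2 : l ≤ 1 := by
      by_contra h
      push_neg at h
      have h0 : (⟨0, by omega⟩ : Fin l) = i := hl _
      have h1 : (⟨1, by omega⟩ : Fin l) = i := hl _
      rw [← h1] at h0
      simp at h0
    simp only [Nat.zero_mul, Nat.sub_zero, Nat.choose_zero_right]
    have : (l : ℤ) ≤ 1 := by exact_mod_cast hl2
    push_cast
    linarith
  -- main case k ≥ 1
  set X : Finset {s : Finset (Fin n) // s.card = k} := univ.filter (fun v => c v = i) with hX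
  have hx1 : 1 ≤ x := by
    rw [← hXcard]
    obtain ⟨v, hv⟩ := hc.1 i
    exact Finset.card_pos.mpr ⟨v, by simp [hX, hv]⟩
  set U : Finset (Fin n) := X.biUnion (fun u => u.1) with hU
  have hUcard : U.card ≤ k * x := by
    calc U.card ≤ ∑ u ∈ X, u.1.card := Finset.card_biUnion_le
    _ = ∑ u ∈ X, k := by
        exact Finset.sum_congr rfl (fun u _ => u.2)
    _ = x * k := by rw [Finset.sum_const, hXcard, smul_eq_mul]
    _ = k * x := Nat.mul_comm x k
  set T := univ.filter (fun v : {s : Finset (Fin n) // s.card = k} => Disjoint v.1 U) with hT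
  -- T is large
  have hTcard : (n - k * x).choose k ≤ T.card := by
    have h1 : (n - k * x).choose k ≤ Uᶜ.card.choose k := by
      apply Nat.choose_le_choose
      rw [Finset.card_compl, Fintype.card_fin]
      omega
    have h2 : (Uᶜ.powersetCard k).card ≤ T.card := by
      apply Finset.card_le_card_of_surjOn (fun v : {s : Finset (Fin n) // s.card = k} => v.1)
      intro s hs
      simp only [Finset.mem_coe, Finset.mem_powersetCard] at hs
      obtain ⟨hsub, hcard⟩ := hs
      refine ⟨⟨s, hcard⟩, ?_, rfl⟩
      simp only [Finset.mem_coe, hT, Finset.mem_filter, Finset.mem_univ, true_and]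
      exact Finset.disjoint_right.mpr (fun a ha hmem => (Finset.mem_compl.mp (hsub hmem)) ha)
    rw [Finset.card_powersetCard] at h2
    exact le_trans h1 h2
    -- every vertex in T is adjacent to all of X
  have hTa : ∀ v ∈ T, (X.filter (fun u => (kneser n k).Adj u v)).card = x := by
    intro v hv
    rw [hT, Finset.mem_filter] at hv
    have : X.filter (fun u => (kneser n k).Adj u v) = X := by
      apply Finset.filter_true_of_mem
      intro u hu
      have hsubU : u.1 ⊆ U := by
        rw [hU]; exact Finset.subset_biUnion_of_mem _ hu
      have hdisj : Disjoint u.1 v.1 := (hv.2.mono_right hsubU).symm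
      refine ⟨?_, hdisj⟩
      intro h
      rw [h] at hdisj
      have hvemp : v.1 = ∅ := by simpa using disjoint_self.mp hdisj
      have := v.2
      rw [hvemp] at this
      simp at this
      omega
    rw [this, hXcard]
  -- the set S of colors witnessed by edges from X
  set S := univ.filter (fun v : {s : Finset (Fin n) // s.card = k} =>
    c v ≠ i ∧ (X.filter (fun u => (kneser n k).Adj u v)).Nonempty) with hS
  have hScard : l - 1 ≤ S.card := by
    have := Finset.card_le_card_of_surjOn c (s := S) (t := univ.erase i) ?_
    · rwa [Finset.card_erase_of_mem (Finset.mem_univ i), Finset.card_univ,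
        Fintype.card_fin] at this
    · intro j hj
      simp only [Finset.coe_erase, Set.mem_diff, Finset.mem_coe, Finset.mem_univ,
        Set.mem_singleton_iff, true_and] at hj
      obtain ⟨u, v, hadj, hcu, hcv⟩ := hc.2 i j (fun h => hj h.symm)
      refine ⟨v, ?_, hcv⟩
      simp only [Finset.mem_coe, hS, Finset.mem_filter, Finset.mem_univ, true_and]
      exact ⟨by rw [hcv]; exact hj, ⟨u, Finset.mem_filter.mpr
        ⟨Finset.mem_filter.mpr ⟨Finset.mem_univ u, hcu⟩, hadj⟩⟩⟩
  -- each vertex of X has degree at most (n-k).choose k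
  have hdeg : ∀ u : {s : Finset (Fin n) // s.card = k},
      (univ.filter (fun v => (kneser n k).Adj u v)).card ≤ (n - k).choose k := by
    intro u
    have h1 : (univ.filter (fun v => (kneser n k).Adj u v)).card
        ≤ ((u.1ᶜ).powersetCard k).card := by
      apply Finset.card_le_card_of_injOn (fun v => v.1)
      · intro v hv
        rw [Finset.mem_coe, Finset.mem_filter] at hv
        rw [Finset.mem_coe, Finset.mem_powersetCard]
        exact ⟨fun a ha => Finset.mem_compl.mpr (Finset.disjoint_left.mp hv.2.2 · ha), v.2⟩
      · intro a _ b _ hab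
        exact Subtype.ext hab
    rw [Finset.card_powersetCard, Finset.card_compl, Fintype.card_fin, u.2] at h1
    exact h1
  -- double counting
  have hkey : ∑ v : {s : Finset (Fin n) // s.card = k},
      (X.filter (fun u => (kneser n k).Adj u v)).card ≤ x * ((n - k).choose k) := by
    have swap : ∑ v : {s : Finset (Fin n) // s.card = k},
        (X.filter (fun u => (kneser n k).Adj u v)).card
        = ∑ u ∈ X, (univ.filter (fun v => (kneser n k).Adj u v)).card := by
      simp only [Finset.card_filter]
      rw [Finset.sum_comm]
    rw [swap]
    calc ∑ u ∈ X, (univ.filter (fun v => (kneser n k).Adj u v)).card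
        ≤ ∑ u ∈ X, (n - k).choose k := Finset.sum_le_sum (fun u _ => hdeg u)
      _ = x * ((n - k).choose k) := by rw [Finset.sum_const, hXcard, smul_eq_mul]
  -- splitting the sum
  have hsplit : (S \ T).card + x * T.card ≤ x * ((n - k).choose k) := by
    refine le_trans ?_ hkey
    have hsub : ∑ v ∈ S ∪ T, (X.filter (fun u => (kneser n k).Adj u v)).card
        ≤ ∑ v : {s : Finset (Fin n) // s.card = k},
          (X.filter (fun u => (kneser n k).Adj u v)).card :=
      Finset.sum_le_sum_of_subset (Finset.subset_univ _)
    refine le_trans ?_ hsub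
    rw [← Finset.sum_sdiff (Finset.subset_union_right (s₁ := S)), Finset.union_sdiff_right]
    have h1 : (S \ T).card ≤ ∑ v ∈ S \ T, (X.filter (fun u => (kneser n k).Adj u v)).card := by
      calc (S \ T).card = ∑ _v ∈ S \ T, 1 := by
            rw [Finset.sum_const, smul_eq_mul, mul_one]
        _ ≤ _ := Finset.sum_le_sum (fun v hv => by
            have hvS := (Finset.mem_sdiff.mp hv).1
            rw [hS, Finset.mem_filter] at hvS
            exact Finset.card_pos.mpr hvS.2.2)
    have h2 : x * T.card = ∑ v ∈ T, (X.filter (fun u => (kneser n k).Adj u v)).card := by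
      rw [Finset.sum_congr rfl hTa, Finset.sum_const, smul_eq_mul, mul_comm]
    omega
  have hST : S.card ≤ (S \ T).card + T.card := by
    have := Finset.card_union_le (S \ T) T
    have h2 : S ⊆ (S \ T) ∪ T := by
      rw [Finset.sdiff_union_self_eq_union]
      exact Finset.subset_union_left
    have := Finset.card_le_card h2
    omega
  -- conclude over the integers
  have hA : ((S \ T).card : ℤ) + x * T.card ≤ x * ((n - k).choose k) := by exact_mod_cast hsplit
  have hB : (l : ℤ) - 1 ≤ (S \ T).card + T.card := by
    have : (l : ℤ) - 1 ≤ S.card := by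
      have : ((l - 1 : ℕ) : ℤ) ≤ S.card := by exact_mod_cast hScard
      omega
    have h2 : (S.card : ℤ) ≤ (S \ T).card + T.card := by exact_mod_cast hST
    linarith
  have hC : ((n - k * x).choose k : ℤ) ≤ T.card := by exact_mod_cast hTcard
  have hx1' : (1 : ℤ) ≤ x := by exact_mod_cast hx1
  nlinarith [mul_nonneg (by linarith : (0:ℤ) ≤ (x:ℤ) - 1)
    (by linarith : (0:ℤ) ≤ (T.card : ℤ) - ((n - k * x).choose k : ℤ))]
end

section
/- Let V be a set of points in general position in the plane, and let T1 and T2 be two triangles with vertices in V sharing at most one vertex. Then there is an edge (closed straight-line segment between two vertices) of T1 and an edge of T2 that are disjoint as subsets of the plane. -/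
open Finset

/-- A finite point set in the plane is in general position if no three distinct
points of it are collinear. -/
def GenPos (V : Finset (ℝ × ℝ)) : Prop :=
  ∀ p ∈ V, ∀ q ∈ V, ∀ r ∈ V, p ≠ q → p ≠ r → q ≠ r →
    ¬ Collinear ℝ ({p, q, r} : Set (ℝ × ℝ))

/-- The closed straight-line segment spanned by a (two-element) point set,
as the convex hull of its endpoints. -/
def seg (e : Finset (ℝ × ℝ)) : Set (ℝ × ℝ) := convexHull ℝ (e : Set (ℝ × ℝ))

/-- 2×2 determinant of two plane vectors. -/
def det2 (u v : ℝ × ℝ) : ℝ := u.1 * v.2 - u.2 * v.1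

lemma det2_zero (u : ℝ × ℝ) : det2 u 0 = 0 := by simp [det2]

lemma det2_self (u : ℝ × ℝ) : det2 u u = 0 := by simp [det2]; ring

lemma det2_sub_self (u v : ℝ × ℝ) : det2 u (v - u) = det2 u v := by
  simp [det2]; ring

lemma det2_sub (u w z : ℝ × ℝ) : det2 u (w - z) = det2 u w - det2 u z := by
  simp [det2]; ring

lemma collinear_of_det2 {p q r : ℝ × ℝ} (h : det2 (q - p) (r - p) = 0) :
    Collinear ℝ ({p, q, r} : Set (ℝ × ℝ)) := by
  simp only [det2, Prod.fst_sub, Prod.snd_sub] at h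
  by_cases hq : q = p
  · have hsub : ({p, q, r} : Set (ℝ × ℝ)) ⊆ {p, r} := by
      intro x hx
      simp only [Set.mem_insert_iff, Set.mem_singleton_iff] at hx ⊢
      rcases hx with rfl | rfl | rfl
      · tauto
      · left; exact hq
      · tauto
    exact Collinear.subset hsub (collinear_pair ℝ p r)
  · rw [collinear_iff_of_mem (Set.mem_insert p _)]
    refine ⟨q - p, fun x hx => ?_⟩
    simp only [Set.mem_insert_iff, Set.mem_singleton_iff] at hx
    rcases hx with rfl | rfl | hxr
    · exact ⟨0, by simp⟩
    · exact ⟨1, by simp⟩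
    · subst hxr
      by_cases h1 : q.1 - p.1 = 0
      · have h2 : q.2 - p.2 ≠ 0 := by
          intro h2
          apply hq
          have e1 : q.1 = p.1 := by linarith
          have e2 : q.2 = p.2 := by linarith
          exact Prod.ext e1 e2
        have h3 : x.1 - p.1 = 0 := by
          rw [h1] at h
          rcases mul_eq_zero.mp (by linarith : (q.2 - p.2) * (x.1 - p.1) = 0) with
            h' | h'
          · exact absurd h' h2
          · exact h'
        refine ⟨(x.2 - p.2) / (q.2 - p.2), ?_⟩
        simp only [vadd_eq_add]
        apply Prod.ext
        · simp only [Prod.fst_add, Prod.smul_fst, Prod.fst_sub, smul_eq_mul, h1,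
            mul_zero, zero_add]
          linarith
        · simp only [Prod.snd_add, Prod.smul_snd, Prod.snd_sub, smul_eq_mul]
          field_simp
          ring
      · refine ⟨(x.1 - p.1) / (q.1 - p.1), ?_⟩
        simp only [vadd_eq_add]
        apply Prod.ext
        · simp only [Prod.fst_add, Prod.smul_fst, Prod.fst_sub, smul_eq_mul]
          field_simp
          ring
        · simp only [Prod.snd_add, Prod.smul_snd, Prod.snd_sub, smul_eq_mul]
          field_simp
          linear_combination h

lemma collinear_of_mem_segment {v a b : ℝ × ℝ} (h : v ∈ segment ℝ a b) :
    Collinear ℝ ({v, a, b} : Set (ℝ × ℝ)) := by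
  rw [segment_eq_image'] at h
  obtain ⟨t, _, rfl⟩ := h
  rw [collinear_iff_of_mem (Set.mem_insert _ _)]
  refine ⟨b - a, fun x hx => ?_⟩
  simp only [Set.mem_insert_iff, Set.mem_singleton_iff] at hx
  rcases hx with rfl | rfl | rfl
  · exact ⟨0, by simp only [vadd_eq_add]; module⟩
  · exact ⟨-t, by simp only [vadd_eq_add]; module⟩
  · exact ⟨1 - t, by simp only [vadd_eq_add]; module⟩

lemma det2_add_smul (u w z : ℝ × ℝ) (s : ℝ) :
    det2 u (w + s • z) = det2 u w + s * det2 u z := by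
  simp [det2, Prod.fst_add, Prod.snd_add, Prod.smul_fst, Prod.smul_snd, smul_eq_mul]
  ring

/-- Key middle-point lemma: if three points on segments [q,r], [p,r], [p,q]
are such that the one on [p,q] is between the other two, and the two outer
ones lie on a common segment [a,b], then p or q lies on [a,b]. -/
lemma keyM {p q r a b x₁ x₂ x₃ : ℝ × ℝ} (hd : det2 (q - p) (r - p) ≠ 0)
    (h1 : x₁ ∈ segment ℝ q r) (h2 : x₂ ∈ segment ℝ p r) (h3 : x₃ ∈ segment ℝ p q)
    (hmid : x₃ ∈ segment ℝ x₁ x₂)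
    (hab1 : x₁ ∈ segment ℝ a b) (hab2 : x₂ ∈ segment ℝ a b) :
    p ∈ segment ℝ a b ∨ q ∈ segment ℝ a b := by
  rw [segment_eq_image'] at h1 h2 h3 hmid
  obtain ⟨s₁, hs₁, h1e⟩ := h1
  obtain ⟨s₂, hs₂, h2e⟩ := h2
  obtain ⟨s₃, hs₃, h3e⟩ := h3
  obtain ⟨l, hl, hme⟩ := hmid
  simp only [Set.mem_Icc] at hs₁ hs₂ hs₃ hl
  set d := det2 (q - p) (r - p) with hdef
  have F1 : det2 (q - p) (x₁ - p) = s₁ * d := by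
    rw [← h1e]
    have e : q + s₁ • (r - q) - p = (q - p) + s₁ • ((r - p) - (q - p)) := by module
    rw [e, det2_add_smul, det2_self, det2_sub_self, ← hdef]
    ring
  have F2 : det2 (q - p) (x₂ - p) = s₂ * d := by
    rw [← h2e]
    have e : p + s₂ • (r - p) - p = (0 : ℝ × ℝ) + s₂ • (r - p) := by module
    rw [e, det2_add_smul, det2_zero, zero_add, ← hdef]
  have F3 : det2 (q - p) (x₃ - p) = 0 := by
    rw [← h3e]
    have e : p + s₃ • (q - p) - p = (0 : ℝ × ℝ) + s₃ • (q - p) := by module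
    rw [e, det2_add_smul, det2_zero, det2_self, zero_add, mul_zero]
  have Fm : det2 (q - p) (x₃ - p) = det2 (q - p) (x₁ - p)
      + l * (det2 (q - p) (x₂ - p) - det2 (q - p) (x₁ - p)) := by
    rw [← hme]
    have e : x₁ + l • (x₂ - x₁) - p = (x₁ - p) + l • ((x₂ - p) - (x₁ - p)) := by module
    rw [e, det2_add_smul]
    rw [det2_sub (q - p) (x₂ - p) (x₁ - p)]
  rw [F1, F2, F3] at Fm
  have key : (1 - l) * s₁ + l * s₂ = 0 := by
    have : ((1 - l) * s₁ + l * s₂) * d = 0 := by linarith [Fm]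
    rcases mul_eq_zero.mp this with h | h
    · exact h
    · exact absurd h hd
  have t1 : (1 - l) * s₁ = 0 := by
    nlinarith [hl.1, hl.2, hs₁.1, hs₂.1]
  have t2 : l * s₂ = 0 := by linarith
  by_cases hs10 : s₁ = 0
  · right
    have : x₁ = q := by rw [← h1e, hs10]; simp
    rwa [this] at hab1
  by_cases hs20 : s₂ = 0
  · left
    have : x₂ = p := by rw [← h2e, hs20]; simp
    rwa [this] at hab2
  · exfalso
    have hl1 : 1 - l = 0 := by
      rcases mul_eq_zero.mp t1 with h | h
      · exact h
      · exact absurd h hs10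
    have hl0 : l = 0 := by
      rcases mul_eq_zero.mp t2 with h | h
      · exact h
      · exact absurd h hs20
    linarith

/-- Main segment-vs-triangle lemma: a segment [a,b] with endpoints off the
triangle cannot meet all three edges, unless a vertex lies on [a,b]. -/
lemma key_lemma {p q r a b : ℝ × ℝ} (hd : det2 (q - p) (r - p) ≠ 0)
    (h1 : ¬ Disjoint (segment ℝ q r) (segment ℝ a b))
    (h2 : ¬ Disjoint (segment ℝ p r) (segment ℝ a b))
    (h3 : ¬ Disjoint (segment ℝ p q) (segment ℝ a b)) :
    ∃ v ∈ ({p, q, r} : Set (ℝ × ℝ)), v ∈ segment ℝ a b := by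
  obtain ⟨x₁, hx₁, hx₁'⟩ := Set.not_disjoint_iff.mp h1
  obtain ⟨x₂, hx₂, hx₂'⟩ := Set.not_disjoint_iff.mp h2
  obtain ⟨x₃, hx₃, hx₃'⟩ := Set.not_disjoint_iff.mp h3
  have hcol : Collinear ℝ ({x₁, x₂, x₃} : Set (ℝ × ℝ)) := by
    rw [segment_eq_image'] at hx₁' hx₂' hx₃'
    obtain ⟨t₁, _, h1e⟩ := hx₁'
    obtain ⟨t₂, _, h2e⟩ := hx₂'
    obtain ⟨t₃, _, h3e⟩ := hx₃'
    rw [collinear_iff_of_mem (Set.mem_insert x₁ _)]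
    refine ⟨b - a, fun x hx => ?_⟩
    simp only [Set.mem_insert_iff, Set.mem_singleton_iff] at hx
    rcases hx with rfl | rfl | rfl
    · exact ⟨0, by simp only [vadd_eq_add]; module⟩
    · exact ⟨t₂ - t₁, by rw [← h1e, ← h2e]; simp only [vadd_eq_add]; module⟩
    · exact ⟨t₃ - t₁, by rw [← h1e, ← h3e]; simp only [vadd_eq_add]; module⟩
  obtain ⟨x₁', hx₁2, hx₁2'⟩ := Set.not_disjoint_iff.mp h1
  rcases hcol.wbtw_or_wbtw_or_wbtw with hw | hw | hw
  · -- x₂ between x₁ and x₃: x₂ ∈ segment p r; roles (p,r,q)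
    have hd' : det2 (r - p) (q - p) ≠ 0 := by
      intro h; apply hd
      have : det2 (q - p) (r - p) = -(det2 (r - p) (q - p)) := by
        simp [det2]; ring
      rw [this, h, neg_zero]
    have := keyM (p := p) (q := r) (r := q) (a := a) (b := b)
      (x₁ := x₁) (x₂ := x₃) (x₃ := x₂) hd'
      (by rwa [segment_symm] at hx₁) hx₃ hx₂ hw.mem_segment hx₁' hx₃'
    rcases this with h | h
    · exact ⟨p, by simp, h⟩
    · exact ⟨r, by simp, h⟩
  · -- x₃ between x₂ and x₁: x₃ ∈ segment p q; roles (p,q,r)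
    have := keyM (p := p) (q := q) (r := r) (a := a) (b := b)
      (x₁ := x₁) (x₂ := x₂) (x₃ := x₃) hd hx₁ hx₂ hx₃
      (by rw [segment_symm]; exact hw.mem_segment) hx₁' hx₂'
    rcases this with h | h
    · exact ⟨p, by simp, h⟩
    · exact ⟨q, by simp, h⟩
  · -- x₁ between x₃ and x₂: x₁ ∈ segment q r; roles (r,q,p)
    have hd' : det2 (q - r) (p - r) ≠ 0 := by
      intro h; apply hd
      have : det2 (q - p) (r - p) = -(det2 (q - r) (p - r)) := by
        simp [det2]; ring
      rw [this, h, neg_zero]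
    have := keyM (p := r) (q := q) (r := p) (a := a) (b := b)
      (x₁ := x₃) (x₂ := x₂) (x₃ := x₁) hd'
      (by rwa [segment_symm] at hx₃) (by rwa [segment_symm] at hx₂)
      (by rwa [segment_symm] at hx₁) hw.mem_segment hx₃' hx₂'
    rcases this with h | h
    · exact ⟨r, by simp, h⟩
    · exact ⟨q, by simp, h⟩

/-- Two triangles with vertices in a point set in general position, sharing at
most one vertex, contain two disjoint edges. -/
theorem triangles_contain_disjoint_edges (V : Finset (ℝ × ℝ)) (hV : GenPos V)
    (T1 T2 : Finset (ℝ × ℝ)) (hT1 : T1 ⊆ V) (hT2 : T2 ⊆ V)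
    (hc1 : T1.card = 3) (hc2 : T2.card = 3)
    (hshare : (T1 ∩ T2).card ≤ 1) :
    ∃ e1 ⊆ T1, ∃ e2 ⊆ T2, e1.card = 2 ∧ e2.card = 2 ∧
      Disjoint (seg e1) (seg e2) := by
  obtain ⟨p, q, r, hpq, hpr, hqr, hT1e⟩ := Finset.card_eq_three.mp hc1
  -- find two points of T2 not in T1
  have hsd : 1 < (T2 \ T1).card := by
    have h := Finset.card_sdiff_add_card_inter T2 T1
    rw [Finset.inter_comm] at h
    omega
  obtain ⟨a, ha, b, hb, hab⟩ := Finset.one_lt_card.mp hsd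
  rw [Finset.mem_sdiff] at ha hb
  by_contra hcon
  push_neg at hcon
  have hpV : p ∈ V := hT1 (by rw [hT1e]; simp)
  have hqV : q ∈ V := hT1 (by rw [hT1e]; simp)
  have hrV : r ∈ V := hT1 (by rw [hT1e]; simp)
  have haV : a ∈ V := hT2 ha.1
  have hbV : b ∈ V := hT2 hb.1
  have hseg : ∀ x y : ℝ × ℝ, x ≠ y → seg {x, y} = segment ℝ x y := by
    intro x y _
    rw [seg]
    have : (({x, y} : Finset (ℝ × ℝ)) : Set (ℝ × ℝ)) = {x, y} := by simp
    rw [this, convexHull_pair]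
  have hsub : ∀ x ∈ T1, ∀ y ∈ T1, ({x, y} : Finset (ℝ × ℝ)) ⊆ T1 := by
    intro x hx y hy z hz
    rw [Finset.mem_insert, Finset.mem_singleton] at hz
    rcases hz with rfl | rfl <;> assumption
  have habs : ({a, b} : Finset (ℝ × ℝ)) ⊆ T2 := by
    intro z hz
    rw [Finset.mem_insert, Finset.mem_singleton] at hz
    rcases hz with rfl | rfl
    exacts [ha.1, hb.1]
  have hmem : ∀ x y : ℝ × ℝ, x ∈ T1 → y ∈ T1 → x ≠ y →
      ¬ Disjoint (segment ℝ x y) (segment ℝ a b) := by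
    intro x y hx hy hxy
    have h := hcon {x, y} (hsub x hx y hy) {a, b} habs
      (Finset.card_pair hxy) (Finset.card_pair hab)
    rwa [hseg x y hxy, hseg a b hab] at h
  have hPm : p ∈ T1 := by rw [hT1e]; simp
  have hQm : q ∈ T1 := by rw [hT1e]; simp
  have hRm : r ∈ T1 := by rw [hT1e]; simp
  -- non-collinearity of p q r gives nonzero det
  have hncol : ¬ Collinear ℝ ({p, q, r} : Set (ℝ × ℝ)) :=
    hV p hpV q hqV r hrV hpq hpr hqr
  have hd : det2 (q - p) (r - p) ≠ 0 := fun h => hncol (collinear_of_det2 h)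
  obtain ⟨v, hv, hvab⟩ := key_lemma hd
    (hmem q r hQm hRm hqr) (hmem p r hPm hRm hpr) (hmem p q hPm hQm hpq)
  -- v is a vertex of T1 on segment a b: contradiction with general position
  have hvT1 : v ∈ T1 := by
    rw [hT1e]
    simp only [Set.mem_insert_iff, Set.mem_singleton_iff] at hv
    rcases hv with rfl | rfl | rfl <;> simp
  have hvV : v ∈ V := hT1 hvT1
  have hva : v ≠ a := fun h => ha.2 (h ▸ hvT1)
  have hvb : v ≠ b := fun h => hb.2 (h ▸ hvT1)
  exact hV v hvV a haV b hbV hva hvb hab (collinear_of_mem_segment hvab)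
end

section
/- A straight-line thrackle on n points in general position has at most n segments: if S is a set of closed straight-line segments with endpoints among n points in general position such that any two distinct segments of S either share an endpoint or cross each other, then |S| ≤ n. -/
open Finset

/-- Two segments cross if they intersect in a single point that is interior to
both (i.e. is not an endpoint of either). -/
def Crosses (e f : Finset (ℝ × ℝ)) : Prop :=
  ∃! x : ℝ × ℝ, (x ∈ seg e ∩ seg f) ∧ x ∉ (e : Set (ℝ × ℝ)) ∧ x ∉ (f : Set (ℝ × ℝ))

/-- orientation determinant -/
noncomputable def orient (p q r : ℝ × ℝ) : ℝ :=
  (q.1 - p.1) * (r.2 - p.2) - (q.2 - p.2) * (r.1 - p.1)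

lemma orient_affine (u v w z : ℝ × ℝ) (s t : ℝ) (h : s + t = 1) :
    orient u v (s • w + t • z) = s * orient u v w + t * orient u v z := by
  have hs : s = 1 - t := by linarith
  subst hs
  simp only [orient, Prod.fst_add, Prod.snd_add, Prod.smul_fst, Prod.smul_snd, smul_eq_mul]
  ring

lemma mem_seg_pair {u a x : ℝ × ℝ} (hx : x ∈ seg {u, a}) :
    ∃ s t : ℝ, 0 ≤ s ∧ 0 ≤ t ∧ s + t = 1 ∧ x = s • u + t • a := by
  have hcoe : (({u, a} : Finset (ℝ × ℝ)) : Set (ℝ × ℝ)) = {u, a} := by simp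
  rw [seg, hcoe, convexHull_pair] at hx
  obtain ⟨s, t, hs, ht, hst, hx⟩ := hx
  exact ⟨s, t, hs, ht, hst, hx.symm⟩

lemma collinear_of_orient {u v w : ℝ × ℝ} (huv : u ≠ v) (h : orient u v w = 0) :
    Collinear ℝ ({u, v, w} : Set (ℝ × ℝ)) := by
  rw [collinear_iff_of_mem (Set.mem_insert u _)]
  refine ⟨v - u, ?_⟩
  intro p hp
  simp only [Set.mem_insert_iff, Set.mem_singleton_iff] at hp
  rcases hp with rfl | rfl | rfl
  · exact ⟨0, by simp⟩
  · exact ⟨1, by simp [vadd_eq_add]⟩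
  · unfold orient at h
    by_cases h1 : v.1 - u.1 = 0
    · have h2 : (v.2 - u.2) * (p.1 - u.1) = 0 := by
        linear_combination (p.2 - u.2) * h1 - h
      refine ⟨(p.2 - u.2) / (v.2 - u.2), ?_⟩
      have hv2 : v.2 - u.2 ≠ 0 := by
        intro h2'
        apply huv
        apply Prod.ext <;> [skip; skip] <;> linarith
      have hp1 : p.1 - u.1 = 0 := by
        rcases mul_eq_zero.mp h2 with h' | h'
        · exact absurd h' hv2
        · exact h'
      apply Prod.ext
      · simp only [vadd_eq_add, Prod.fst_add, Prod.smul_fst, Prod.fst_sub, smul_eq_mul]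
        rw [h1]
        linarith
      · simp only [vadd_eq_add, Prod.snd_add, Prod.smul_snd, Prod.snd_sub, smul_eq_mul]
        field_simp
        ring
    · refine ⟨(p.1 - u.1) / (v.1 - u.1), ?_⟩
      apply Prod.ext
      · simp only [vadd_eq_add, Prod.fst_add, Prod.smul_fst, Prod.fst_sub, smul_eq_mul]
        field_simp
        ring
      · simp only [vadd_eq_add, Prod.snd_add, Prod.smul_snd, Prod.snd_sub, smul_eq_mul]
        rw [div_mul_eq_mul_div, eq_comm, div_add' _ _ _ h1, div_eq_iff h1]
        linear_combination -h

lemma orient_self_right (u v : ℝ × ℝ) : orient u v v = 0 := by unfold orient; ring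
lemma orient_self_mid (u v : ℝ × ℝ) : orient u v u = 0 := by unfold orient; ring
lemma orient_swap23 (u v w : ℝ × ℝ) : orient u w v = - orient u v w := by unfold orient; ring
lemma orient_swap12 (u v w : ℝ × ℝ) : orient v u w = - orient u v w := by unfold orient; ring

/-- If `a` and `b` are strictly on opposite sides of the line `uv`, then the
segments `[u,a]` and `[v,b]` are disjoint, so they do not cross. -/
lemma not_crosses_of_sides {u v a b : ℝ × ℝ} (huv : u ≠ v)
    (ha : orient u v a < 0) (hb : 0 < orient u v b) :
    ¬ Crosses {u, a} {v, b} := by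
  rintro ⟨x, ⟨⟨hx1, hx2⟩, -, -⟩, -⟩
  obtain ⟨s, t, hs, ht, hst, hxe⟩ := mem_seg_pair hx1
  obtain ⟨s', t', hs', ht', hst', hxf⟩ := mem_seg_pair hx2
  have h1 : orient u v x = t * orient u v a := by
    rw [hxe, orient_affine u v u a s t hst, orient_self_mid]; ring
  have h2 : orient u v x = t' * orient u v b := by
    rw [hxf, orient_affine u v v b s' t' hst', orient_self_right]; ring
  have htz : t = 0 := by nlinarith
  have htz' : t' = 0 := by nlinarith
  apply huv
  have hxu : x = u := by
    rw [hxe, htz]; have : s = 1 := by linarith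
    rw [this]; simp
  have hxv : x = v := by
    rw [hxf, htz']; have : s' = 1 := by linarith
    rw [this]; simp
  rw [← hxu, hxv]

/-- Edge `{u,v}` is pivotal at `u`: all other edges at `u` are strictly on the
positive side of the ray `u → v`. -/
def Piv (S : Finset (Finset (ℝ × ℝ))) (u v : ℝ × ℝ) : Prop :=
  ({u, v} : Finset (ℝ × ℝ)) ∈ S ∧
    ∀ w, ({u, w} : Finset (ℝ × ℝ)) ∈ S → w ≠ v → 0 < orient u v w

lemma piv_unique {S : Finset (Finset (ℝ × ℝ))} {u v w : ℝ × ℝ}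
    (h1 : Piv S u v) (h2 : Piv S u w) : v = w := by
  by_contra hne
  have a1 := h1.2 w h2.1 (Ne.symm hne)
  have a2 := h2.2 v h1.1 hne
  rw [orient_swap23] at a2
  linarith

/-- Erdős: a straight-line thrackle on n points in general position has at most
n segments. -/
theorem thrackle_card_le (V : Finset (ℝ × ℝ)) (hV : GenPos V)
    (S : Finset (Finset (ℝ × ℝ))) (hS : ∀ e ∈ S, e ∈ V.powersetCard 2)
    (hthr : ∀ e ∈ S, ∀ f ∈ S, e ≠ f → (e ∩ f).Nonempty ∨ Crosses e f) :
    S.card ≤ V.card := by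
  classical
  -- every edge of S is a pair of distinct points of V
  have hedge : ∀ e ∈ S, ∃ u v : ℝ × ℝ, u ≠ v ∧ e = {u, v} ∧ u ∈ V ∧ v ∈ V := by
    intro e he
    have h := Finset.mem_powersetCard.mp (hS e he)
    obtain ⟨u, v, huv, rfl⟩ := Finset.card_eq_two.mp h.2
    exact ⟨u, v, huv, rfl, h.1 (by simp), h.1 (by simp)⟩
  -- nonvanishing of orientations on V
  have onz : ∀ u ∈ V, ∀ v ∈ V, ∀ w ∈ V, u ≠ v → u ≠ w → v ≠ w → orient u v w ≠ 0 := by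
    intro u hu v hv w hw h1 h2 h3 h0
    exact hV u hu v hv w hw h1 h2 h3 (collinear_of_orient h1 h0)
  -- from non-pivotality extract a strictly negative witness
  have notpiv : ∀ u v : ℝ × ℝ, ({u, v} : Finset (ℝ × ℝ)) ∈ S → u ≠ v → u ∈ V → v ∈ V →
      ¬ Piv S u v → ∃ a, ({u, a} : Finset (ℝ × ℝ)) ∈ S ∧ a ≠ v ∧ a ≠ u ∧ a ∈ V ∧
        orient u v a < 0 := by
    intro u v huvS huv hu hv hnp
    unfold Piv at hnp
    push_neg at hnp
    obtain ⟨a, haS, hav, ha⟩ := hnp huvS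
    have hpa := Finset.mem_powersetCard.mp (hS _ haS)
    have hau : a ≠ u := by
      intro hh; subst hh
      have := hpa.2
      simp at this
    have haV : a ∈ V := hpa.1 (by simp)
    have hne0 : orient u v a ≠ 0 := onz u hu v hv a haV huv (Ne.symm hau) (Ne.symm hav)
    exact ⟨a, haS, hav, hau, haV, lt_of_le_of_ne ha hne0⟩
  -- every edge is pivotal at one of its endpoints
  have key : ∀ e ∈ S, ∃ u v : ℝ × ℝ, e = {u, v} ∧ Piv S u v ∧ u ∈ V := by
    intro e he
    obtain ⟨u, v, huv, rfl, hu, hv⟩ := hedge e he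
    by_cases h1 : Piv S u v
    · exact ⟨u, v, rfl, h1, hu⟩
    by_cases h2 : Piv S v u
    · exact ⟨v, u, Finset.pair_comm u v, h2, hv⟩
    exfalso
    obtain ⟨a, haS, hav, hau, haV, ha⟩ := notpiv u v he huv hu hv h1
    have he' : ({v, u} : Finset (ℝ × ℝ)) ∈ S := by rwa [Finset.pair_comm]
    obtain ⟨b, hbS, hbu, hbv, hbV, hb'⟩ := notpiv v u he' huv.symm hv hu h2
    have hb : 0 < orient u v b := by
      rw [orient_swap12] at hb'; linarith
    have hub : u ≠ b := by
      intro hh; rw [← hh] at hb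
      rw [orient_self_mid] at hb; exact lt_irrefl _ hb
    have hab : a ≠ b := by
      intro hh; rw [hh] at ha; linarith
    have hnef : ({u, a} : Finset (ℝ × ℝ)) ≠ {v, b} := by
      intro hh
      have : u ∈ ({v, b} : Finset (ℝ × ℝ)) := hh ▸ (by simp)
      simp only [Finset.mem_insert, Finset.mem_singleton] at this
      rcases this with h | h
      · exact huv h
      · exact hub h
    rcases hthr _ haS _ hbS hnef with hcap | hcr
    · obtain ⟨x, hx⟩ := hcap
      simp only [Finset.mem_inter, Finset.mem_insert, Finset.mem_singleton] at hx
      rcases hx with ⟨h' | h', h'' | h''⟩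
      · exact huv (h' ▸ h'')
      · exact hub (h' ▸ h'')
      · exact hav (h' ▸ h'')
      · exact hab (h' ▸ h'')
    · exact not_crosses_of_sides huv ha hb hcr
  -- extract a pivot function and count
  have key' : ∀ e : Finset (ℝ × ℝ), ∃ u v : ℝ × ℝ,
      e ∈ S → e = {u, v} ∧ Piv S u v ∧ u ∈ V := by
    intro e
    by_cases he : e ∈ S
    · obtain ⟨u, v, h⟩ := key e he
      exact ⟨u, v, fun _ => h⟩
    · exact ⟨0, 0, fun h => absurd h he⟩
  choose fu fv hf using key'
  apply Finset.card_le_card_of_injOn fu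
  · intro e he
    exact (hf e he).2.2
  · intro e he e' he' heq
    simp only [Finset.mem_coe] at he he'
    obtain ⟨h1, h2, -⟩ := hf e he
    obtain ⟨h1', h2', -⟩ := hf e' he'
    rw [heq] at h2
    have := piv_unique h2 h2'
    rw [h1, h1', heq, this]
end

section
/- For n even with n ≡ 0 or 2 (mod 6), the edge set of the complete graph K_n can be partitioned into one perfect matching and a collection of triangles. -/
open Finset


/-- A Steiner triple system predicate on a family of blocks. -/
def IsSTS {α : Type*} (B : Finset (Finset α)) : Prop :=
  (∀ t ∈ B, t.card = 3) ∧ ∀ a b : α, a ≠ b → ∃! t, t ∈ B ∧ a ∈ t ∧ b ∈ t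

theorem sts_transport {α β : Type*} [DecidableEq α] [DecidableEq β] (e : α ≃ β)
    {B : Finset (Finset α)} (h : IsSTS B) :
    IsSTS (B.image (Finset.image e)) := by
  obtain ⟨hcard, hcov⟩ := h
  constructor
  · rintro t ht
    simp only [mem_image] at ht
    obtain ⟨t₀, ht₀, rfl⟩ := ht
    rw [Finset.card_image_of_injective _ e.injective]
    exact hcard t₀ ht₀
  · intro a b hab
    obtain ⟨t₀, ⟨ht₀, ha, hb⟩, huniq⟩ := hcov (e.symm a) (e.symm b) (fun h => hab (by
      simpa using congrArg e h))
    refine ⟨t₀.image e, ⟨mem_image_of_mem _ ht₀, ?_, ?_⟩, ?_⟩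
    · simpa using ⟨e.symm a, ha, by simp⟩
    · simpa using ⟨e.symm b, hb, by simp⟩
    · rintro t ⟨ht, hat, hbt⟩
      simp only [mem_image] at ht
      obtain ⟨t₁, ht₁, rfl⟩ := ht
      have h1 : e.symm a ∈ t₁ := by
        simp only [mem_image] at hat; obtain ⟨x, hx, hxe⟩ := hat
        simpa [← hxe] using hx
      have h2 : e.symm b ∈ t₁ := by
        simp only [mem_image] at hbt; obtain ⟨x, hx, hxe⟩ := hbt
        simpa [← hxe] using hx
      rw [huniq t₁ ⟨ht₁, h1, h2⟩]

theorem delete_point {n : ℕ} {B : Finset (Finset (Fin (n+1)))} (hB : IsSTS B) :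
    ∃ F T : Finset (Finset (Fin n)),
      (∀ e ∈ F, e.card = 2) ∧
      (F : Set (Finset (Fin n))).PairwiseDisjoint id ∧
      (∀ v : Fin n, ∃ e ∈ F, v ∈ e) ∧
      (∀ t ∈ T, t.card = 3) ∧
      (∀ e : Finset (Fin n), e.card = 2 →
        ((e ∈ F ∧ ∀ t ∈ T, ¬ e ⊆ t) ∨ (e ∉ F ∧ ∃! t, t ∈ T ∧ e ⊆ t))) := by
  obtain ⟨hcard, hcov⟩ := hB
  have hinj : Function.Injective (Fin.castSucc (n := n)) := Fin.castSucc_injective n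
  set L := Fin.last n with hL
  set pre : Finset (Fin (n+1)) → Finset (Fin n) :=
    fun s => s.preimage Fin.castSucc (hinj.injOn) with hpre
  have mem_pre : ∀ (s : Finset (Fin (n+1))) (v : Fin n), v ∈ pre s ↔ v.castSucc ∈ s := by
    intro s v; simp [hpre, Finset.mem_preimage]
  have card_pre : ∀ s : Finset (Fin (n+1)), L ∉ s → (pre s).card = s.card := by
    intro s hLs
    rw [hpre]
    rw [Finset.card_preimage]
    congr 1
    apply Finset.filter_true_of_mem
    intro x hx
    have hxL : x ≠ L := fun h => hLs (h ▸ hx)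
    obtain ⟨y, hy⟩ := Fin.exists_castSucc_eq.mpr hxL
    exact ⟨y, hy⟩
  refine ⟨(B.filter (fun t => L ∈ t)).image (fun t => pre (t.erase L)),
    (B.filter (fun t => L ∉ t)).image pre, ?_, ?_, ?_, ?_, ?_⟩
  · -- cards of F
    intro e he
    simp only [mem_image, mem_filter] at he
    obtain ⟨t, ⟨htB, htL⟩, rfl⟩ := he
    rw [card_pre _ (Finset.notMem_erase _ _), Finset.card_erase_of_mem htL, hcard t htB]
  · -- pairwise disjoint
    intro e1 he1 e2 he2 hne
    simp only [coe_image, Set.mem_image, mem_coe, mem_filter] at he1 he2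
    obtain ⟨t1, ⟨ht1, hL1⟩, rfl⟩ := he1
    obtain ⟨t2, ⟨ht2, hL2⟩, rfl⟩ := he2
    simp only [Function.onFun, id]
    rw [Finset.disjoint_left]
    intro v hv1 hv2
    rw [mem_pre] at hv1 hv2
    have hvL : v.castSucc ≠ L := Fin.ne_last_of_lt (Fin.castSucc_lt_last v)
    obtain ⟨t₀, _, huniq⟩ := hcov v.castSucc L hvL
    have e1t : t1 = t₀ := huniq t1 ⟨ht1, Finset.mem_of_mem_erase hv1, hL1⟩
    have e2t : t2 = t₀ := huniq t2 ⟨ht2, Finset.mem_of_mem_erase hv2, hL2⟩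
    exact hne (by rw [e1t, e2t])
  · -- cover
    intro v
    have hvL : v.castSucc ≠ L := Fin.ne_last_of_lt (Fin.castSucc_lt_last v)
    obtain ⟨t₀, ⟨ht₀, hv₀, hL₀⟩, _⟩ := hcov v.castSucc L hvL
    refine ⟨pre (t₀.erase L), ?_, ?_⟩
    · exact mem_image_of_mem _ (mem_filter.2 ⟨ht₀, hL₀⟩)
    · rw [mem_pre]; exact Finset.mem_erase.2 ⟨hvL, hv₀⟩
  · -- cards of T
    intro t ht
    simp only [mem_image, mem_filter] at ht
    obtain ⟨t₀, ⟨ht₀, hL₀⟩, rfl⟩ := ht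
    rw [card_pre _ hL₀]; exact hcard t₀ ht₀
  · -- main dichotomy
    intro e he
    obtain ⟨a, b, hab, rfl⟩ := Finset.card_eq_two.1 he
    have hab' : a.castSucc ≠ b.castSucc := fun h => hab (hinj h)
    obtain ⟨t₀, ⟨ht₀, ha₀, hb₀⟩, huniq⟩ := hcov a.castSucc b.castSucc hab'
    by_cases hLt : L ∈ t₀
    · left
      constructor
      · have hcaL : a.castSucc ≠ L := Fin.ne_last_of_lt (Fin.castSucc_lt_last a)
        have hcbL : b.castSucc ≠ L := Fin.ne_last_of_lt (Fin.castSucc_lt_last b)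
        have : pre (t₀.erase L) = {a, b} := by
          ext v
          rw [mem_pre]
          have ht3 : t₀ = {L, a.castSucc, b.castSucc} := by
            apply (Finset.eq_of_subset_of_card_le _ _).symm
            · intro x hx
              simp only [mem_insert, mem_singleton] at hx
              rcases hx with rfl | rfl | rfl <;> assumption
            · rw [hcard t₀ ht₀,
                Finset.card_insert_of_notMem (by simp [Ne.symm hcaL, Ne.symm hcbL]),
                Finset.card_insert_of_notMem (by simp [hab']), Finset.card_singleton]
          rw [ht3, Finset.mem_erase]
          simp only [mem_insert, mem_singleton, Fin.castSucc_inj]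
          constructor
          · rintro ⟨h1, (h | h | h)⟩
            · exact absurd h h1
            · exact Or.inl h
            · exact Or.inr h
          · rintro (rfl | rfl)
            · exact ⟨hcaL, Or.inr (Or.inl rfl)⟩
            · exact ⟨hcbL, Or.inr (Or.inr rfl)⟩
        rw [← this]
        exact mem_image_of_mem _ (mem_filter.2 ⟨ht₀, hLt⟩)
      · intro t ht hsub
        simp only [mem_image, mem_filter] at ht
        obtain ⟨t₁, ⟨ht₁, hL₁⟩, rfl⟩ := ht
        have ha1 : a.castSucc ∈ t₁ := (mem_pre _ _).1 (hsub (by simp))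
        have hb1 : b.castSucc ∈ t₁ := (mem_pre _ _).1 (hsub (by simp))
        have := huniq t₁ ⟨ht₁, ha1, hb1⟩
        exact hL₁ (this ▸ hLt)
    · right
      constructor
      · intro hF
        simp only [mem_image, mem_filter] at hF
        obtain ⟨t₁, ⟨ht₁, hL₁⟩, heq⟩ := hF
        have ha1 : a ∈ pre (t₁.erase L) := heq ▸ (by simp : a ∈ ({a,b} : Finset (Fin n)))
        have hb1 : b ∈ pre (t₁.erase L) := heq ▸ (by simp : b ∈ ({a,b} : Finset (Fin n)))
        rw [mem_pre] at ha1 hb1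
        have := huniq t₁ ⟨ht₁, Finset.mem_of_mem_erase ha1, Finset.mem_of_mem_erase hb1⟩
        exact hLt (this ▸ hL₁)
      · refine ⟨pre t₀, ⟨mem_image_of_mem _ (mem_filter.2 ⟨ht₀, hLt⟩), ?_⟩, ?_⟩
        · intro v hv
          simp only [mem_insert, mem_singleton] at hv
          rw [mem_pre]
          rcases hv with rfl | rfl <;> assumption
        · rintro t ⟨ht, hsub⟩
          simp only [mem_image, mem_filter] at ht
          obtain ⟨t₁, ⟨ht₁, hL₁⟩, rfl⟩ := ht
          have ha1 : a.castSucc ∈ t₁ := (mem_pre _ _).1 (hsub (by simp))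
          have hb1 : b.castSucc ∈ t₁ := (mem_pre _ _).1 (hsub (by simp))
          rw [huniq t₁ ⟨ht₁, ha1, hb1⟩]


theorem bose_sts {Q : Type*} [Fintype Q] [DecidableEq Q]
    (op : Q → Q → Q) (hcomm : ∀ x y, op x y = op y x)
    (hcancel : ∀ x y z, op x y = op x z → y = z)
    (hidem : ∀ x, op x x = x) :
    ∃ B : Finset (Finset (Q × ZMod 3)), IsSTS B := by
  classical
  have z1 : ∀ j : ZMod 3, j + 1 ≠ j := by decide
  have zall : ∀ j : ZMod 3, j = 0 ∨ j = 1 ∨ j = 2 := by decide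
  have zsplit : ∀ i j : ZMod 3, i ≠ j → j = i + 1 ∨ i = j + 1 := by decide
  have hsurj : ∀ x z, ∃ q, op x q = z := fun x z =>
    (Finite.surjective_of_injective (f := op x) (fun a b h => hcancel x a b h)) z
  set vert : Q → Finset (Q × ZMod 3) := fun x => {(x,0),(x,1),(x,2)} with hvert
  set tri : Q → Q → ZMod 3 → Finset (Q × ZMod 3) :=
    fun p q j => {(p,j),(q,j),(op p q, j+1)} with htri
  set B := (Finset.univ.image vert) ∪
      ((Finset.univ.filter (fun z : Q × Q × ZMod 3 => z.1 ≠ z.2.1)).image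
        (fun z => tri z.1 z.2.1 z.2.2)) with hB
  have memB : ∀ t, t ∈ B ↔ (∃ x, t = vert x) ∨ ∃ p q j, p ≠ q ∧ t = tri p q j := by
    intro t
    simp only [hB, mem_union, mem_image, mem_filter, mem_univ, true_and]
    constructor
    · rintro (⟨x, rfl⟩ | ⟨⟨p,q,j⟩, hpq, rfl⟩)
      · exact Or.inl ⟨x, rfl⟩
      · exact Or.inr ⟨p,q,j,hpq,rfl⟩
    · rintro (⟨x, rfl⟩ | ⟨p,q,j,hpq,rfl⟩)
      · exact Or.inl ⟨x, rfl⟩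
      · exact Or.inr ⟨⟨p,q,j⟩, hpq, rfl⟩
  have tri_comm : ∀ p q j, tri p q j = tri q p j := by
    intro p q j
    rw [htri]
    simp only
    rw [hcomm p q, Finset.insert_comm]
  have mem_vert : ∀ (y : Q) (j : ZMod 3) (x : Q), (y,j) ∈ vert x ↔ y = x := by
    intro y j x
    simp only [hvert, mem_insert, mem_singleton, Prod.mk.injEq]
    constructor
    · rintro (⟨h,_⟩|⟨h,_⟩|⟨h,_⟩) <;> exact h
    · rintro rfl
      rcases zall j with rfl | rfl | rfl
      · exact Or.inl ⟨rfl, rfl⟩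
      · exact Or.inr (Or.inl ⟨rfl, rfl⟩)
      · exact Or.inr (Or.inr ⟨rfl, rfl⟩)
  have mem_tri : ∀ (z : Q × ZMod 3) (p q : Q) (j : ZMod 3),
      z ∈ tri p q j ↔ z = (p,j) ∨ z = (q,j) ∨ z = (op p q, j+1) := by
    intro z p q j; simp [htri]
  refine ⟨B, ?_, ?_⟩
  · -- cards
    intro t ht
    rw [memB] at ht
    have e01 : (0 : ZMod 3) ≠ 1 := by decide
    have e02 : (0 : ZMod 3) ≠ 2 := by decide
    have e12 : (1 : ZMod 3) ≠ 2 := by decide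
    rcases ht with ⟨x, rfl⟩ | ⟨p, q, j, hpq, rfl⟩
    · rw [hvert]
      simp only
      rw [Finset.card_insert_of_notMem (by simp [Prod.ext_iff, e01, e02]),
        Finset.card_insert_of_notMem (by simp [Prod.ext_iff, e12]),
        Finset.card_singleton]
    · rw [htri]
      simp only
      rw [Finset.card_insert_of_notMem (by simp [Prod.ext_iff, hpq, (z1 j).symm]),
        Finset.card_insert_of_notMem (by simp [Prod.ext_iff, (z1 j).symm]),
        Finset.card_singleton]
  · -- coverage
    have key1 : ∀ (x y : Q) (i : ZMod 3), x ≠ y →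
        ∃! t, t ∈ B ∧ (x, i) ∈ t ∧ (y, i) ∈ t := by
      intro x y i hxy
      refine ⟨tri x y i, ⟨(memB _).2 (Or.inr ⟨x,y,i,hxy,rfl⟩),
        (mem_tri _ _ _ _).2 (Or.inl rfl), (mem_tri _ _ _ _).2 (Or.inr (Or.inl rfl))⟩, ?_⟩
      rintro t ⟨ht, hxt, hyt⟩
      rw [memB] at ht
      rcases ht with ⟨x0, rfl⟩ | ⟨p, q, j0, hpq, rfl⟩
      · rw [mem_vert] at hxt hyt
        exact absurd (hxt.trans hyt.symm) hxy
      · rw [mem_tri] at hxt hyt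
        simp only [Prod.mk.injEq] at hxt hyt
        rcases hxt with ⟨h1a, h1b⟩ | ⟨h1a, h1b⟩ | ⟨h1a, h1b⟩ <;>
          rcases hyt with ⟨h2a, h2b⟩ | ⟨h2a, h2b⟩ | ⟨h2a, h2b⟩ <;>
          first
            | (exfalso; revert h1b h2b; revert i j0; decide)
            | skip
        · exact absurd (h1a.trans h2a.symm) hxy
        · subst h1a; subst h2a; subst h1b; rfl
        · subst h1a; subst h2a; subst h1b; rw [tri_comm]
        · exact absurd (h1a.trans h2a.symm) hxy
        · exact absurd (h1a.trans h2a.symm) hxy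
    have key2 : ∀ (x y : Q) (i : ZMod 3),
        ∃! t, t ∈ B ∧ (x, i) ∈ t ∧ (y, i+1) ∈ t := by
      intro x y i
      by_cases hxy : x = y
      · subst hxy
        refine ⟨vert x, ⟨(memB _).2 (Or.inl ⟨x, rfl⟩),
          (mem_vert _ _ _).2 rfl, (mem_vert _ _ _).2 rfl⟩, ?_⟩
        rintro t ⟨ht, hxt, hyt⟩
        rw [memB] at ht
        rcases ht with ⟨x0, rfl⟩ | ⟨p, q, j0, hpq, rfl⟩
        · rw [mem_vert] at hxt; rw [hxt]
        · rw [mem_tri] at hxt hyt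
          simp only [Prod.mk.injEq] at hxt hyt
          rcases hxt with ⟨h1a, h1b⟩ | ⟨h1a, h1b⟩ | ⟨h1a, h1b⟩ <;>
            rcases hyt with ⟨h2a, h2b⟩ | ⟨h2a, h2b⟩ | ⟨h2a, h2b⟩ <;>
            first
              | (exfalso; revert h1b h2b; revert i j0; decide)
              | skip
          · -- x = p, x = op p q
            exact absurd (hcancel p q p (by rw [hidem]; exact h2a.symm.trans h1a)) (Ne.symm hpq)
          · -- x = q, x = op p q
            exact absurd (hcancel q p q (by rw [hidem, hcomm]; exact h2a.symm.trans h1a)) hpq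
      · obtain ⟨q, hq⟩ := hsurj x y
        have hqx : x ≠ q := fun h => hxy (by rw [← hq, ← h, hidem])
        refine ⟨tri x q i, ⟨(memB _).2 (Or.inr ⟨x,q,i,hqx,rfl⟩),
          (mem_tri _ _ _ _).2 (Or.inl rfl),
          (mem_tri _ _ _ _).2 (Or.inr (Or.inr (by rw [hq])))⟩, ?_⟩
        rintro t ⟨ht, hxt, hyt⟩
        rw [memB] at ht
        rcases ht with ⟨x0, rfl⟩ | ⟨p, q0, j0, hpq, rfl⟩
        · rw [mem_vert] at hxt hyt
          exact absurd (hxt.trans hyt.symm) hxy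
        · rw [mem_tri] at hxt hyt
          simp only [Prod.mk.injEq] at hxt hyt
          rcases hxt with ⟨h1a, h1b⟩ | ⟨h1a, h1b⟩ | ⟨h1a, h1b⟩ <;>
            rcases hyt with ⟨h2a, h2b⟩ | ⟨h2a, h2b⟩ | ⟨h2a, h2b⟩ <;>
            first
              | (exfalso; revert h1b h2b; revert i j0; decide)
              | skip
          · -- x = p, i = j0, y = op p q0
            subst h1a; subst h1b
            rw [hcancel x q0 q (h2a.symm.trans hq.symm)]
          · -- x = q0, y = op p q0
            subst h1a; subst h1b
            rw [hcancel x p q (by rw [hcomm]; exact h2a.symm.trans hq.symm), tri_comm]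
    intro a b hab
    obtain ⟨x, i⟩ := a
    obtain ⟨y, j⟩ := b
    by_cases hij : i = j
    · subst hij
      exact key1 x y i (fun h => hab (by rw [h]))
    · rcases zsplit i j hij with rfl | rfl
      · exact key2 x y i
      · obtain ⟨t, ⟨h1, h2, h3⟩, hu⟩ := key2 y x j
        exact ⟨t, ⟨h1, h3, h2⟩, fun t' ⟨k1, k2, k3⟩ => hu t' ⟨k1, k3, k2⟩⟩


theorem skolem_sts {Q : Type*} [Fintype Q] [DecidableEq Q]
    (op : Q → Q → Q) (hcomm : ∀ x y, op x y = op y x)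
    (hcancel : ∀ x y z, op x y = op x z → y = z)
    (hfix : ∀ x, op (op x x) (op x x) = op x x)
    (hbij : ∀ z, op z z = z → ∃! x, op x x ≠ x ∧ op x x = z) :
    ∃ B : Finset (Finset (Option (Q × ZMod 3))), IsSTS B := by
  classical
  have z1 : ∀ j : ZMod 3, j + 1 ≠ j := by decide
  have zall : ∀ j : ZMod 3, j = 0 ∨ j = 1 ∨ j = 2 := by decide
  have zsplit : ∀ i j : ZMod 3, i ≠ j → j = i + 1 ∨ i = j + 1 := by decide
  have z3 : ∀ j : ZMod 3, j + 2 + 1 = j := by decide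
  have z4 : ∀ a b : ZMod 3, a + 1 = b → a = b + 2 := by decide
  have hsurj : ∀ x z, ∃ q, op x q = z := fun x z =>
    (Finite.surjective_of_injective (f := op x) (fun a b h => hcancel x a b h)) z
  set vert : Q → Finset (Option (Q × ZMod 3)) :=
    fun x => {some (x,0), some (x,1), some (x,2)} with hvert
  set wb : Q → ZMod 3 → Finset (Option (Q × ZMod 3)) :=
    fun x j => {none, some (x,j), some (op x x, j+1)} with hwb
  set tri : Q → Q → ZMod 3 → Finset (Option (Q × ZMod 3)) :=
    fun p q j => {some (p,j), some (q,j), some (op p q, j+1)} with htri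
  set B := ((Finset.univ.filter (fun x : Q => op x x = x)).image vert) ∪
      ((Finset.univ.filter (fun z : Q × ZMod 3 => op z.1 z.1 ≠ z.1)).image
        (fun z => wb z.1 z.2)) ∪
      ((Finset.univ.filter (fun z : Q × Q × ZMod 3 => z.1 ≠ z.2.1)).image
        (fun z => tri z.1 z.2.1 z.2.2)) with hB
  have memB : ∀ t, t ∈ B ↔ (∃ x, op x x = x ∧ t = vert x) ∨
      (∃ x j, op x x ≠ x ∧ t = wb x j) ∨ (∃ p q j, p ≠ q ∧ t = tri p q j) := by
    intro t
    simp only [hB, mem_union, mem_image, mem_filter, mem_univ, true_and]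
    constructor
    · rintro ((⟨x, hx, rfl⟩ | ⟨⟨x,j⟩, hx, rfl⟩) | ⟨⟨p,q,j⟩, hpq, rfl⟩)
      · exact Or.inl ⟨x, hx, rfl⟩
      · exact Or.inr (Or.inl ⟨x, j, hx, rfl⟩)
      · exact Or.inr (Or.inr ⟨p,q,j,hpq,rfl⟩)
    · rintro (⟨x, hx, rfl⟩ | ⟨x, j, hx, rfl⟩ | ⟨p,q,j,hpq,rfl⟩)
      · exact Or.inl (Or.inl ⟨x, hx, rfl⟩)
      · exact Or.inl (Or.inr ⟨⟨x,j⟩, hx, rfl⟩)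
      · exact Or.inr ⟨⟨p,q,j⟩, hpq, rfl⟩
  have tri_comm : ∀ p q j, tri p q j = tri q p j := by
    intro p q j
    rw [htri]
    simp only
    rw [hcomm p q, Finset.insert_comm]
  have mem_vert : ∀ (y : Q) (j : ZMod 3) (x : Q), some (y,j) ∈ vert x ↔ y = x := by
    intro y j x
    simp only [hvert, mem_insert, mem_singleton, Option.some.injEq, Prod.mk.injEq]
    constructor
    · rintro (⟨h,_⟩|⟨h,_⟩|⟨h,_⟩) <;> exact h
    · rintro rfl
      rcases zall j with rfl | rfl | rfl
      · exact Or.inl ⟨rfl, rfl⟩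
      · exact Or.inr (Or.inl ⟨rfl, rfl⟩)
      · exact Or.inr (Or.inr ⟨rfl, rfl⟩)
  have none_vert : ∀ x, none ∉ vert x := by intro x; simp [hvert]
  have none_tri : ∀ p q j, none ∉ tri p q j := by intro p q j; simp [htri]
  have none_wb : ∀ x j, none ∈ wb x j := by intro x j; simp [hwb]
  have mem_tri : ∀ (z : Option (Q × ZMod 3)) (p q : Q) (j : ZMod 3),
      z ∈ tri p q j ↔ z = some (p,j) ∨ z = some (q,j) ∨ z = some (op p q, j+1) := by
    intro z p q j; simp [htri]
  have mem_wb : ∀ (z : Option (Q × ZMod 3)) (x : Q) (j : ZMod 3),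
      z ∈ wb x j ↔ z = none ∨ z = some (x,j) ∨ z = some (op x x, j+1) := by
    intro z x j; simp [hwb]
  refine ⟨B, ?_, ?_⟩
  · -- cards
    intro t ht
    rw [memB] at ht
    have e01 : (0 : ZMod 3) ≠ 1 := by decide
    have e02 : (0 : ZMod 3) ≠ 2 := by decide
    have e12 : (1 : ZMod 3) ≠ 2 := by decide
    rcases ht with ⟨x, hx, rfl⟩ | ⟨x, j, hx, rfl⟩ | ⟨p, q, j, hpq, rfl⟩
    · rw [hvert]
      simp only
      rw [Finset.card_insert_of_notMem (by simp [Prod.ext_iff, e01, e02]),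
        Finset.card_insert_of_notMem (by simp [Prod.ext_iff, e12]),
        Finset.card_singleton]
    · rw [hwb]
      simp only
      rw [Finset.card_insert_of_notMem (by simp),
        Finset.card_insert_of_notMem (by simp [Prod.ext_iff, (z1 j).symm]),
        Finset.card_singleton]
    · rw [htri]
      simp only
      rw [Finset.card_insert_of_notMem (by simp [Prod.ext_iff, hpq, (z1 j).symm]),
        Finset.card_insert_of_notMem (by simp [Prod.ext_iff, (z1 j).symm]),
        Finset.card_singleton]
  · -- coverage
    have key0 : ∀ (z : Q) (j : ZMod 3),
        ∃! t, t ∈ B ∧ (none : Option (Q × ZMod 3)) ∈ t ∧ some (z, j) ∈ t := by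
      intro z j
      by_cases hz : op z z = z
      · obtain ⟨x, ⟨hxnf, hxz⟩, hxu⟩ := hbij z hz
        refine ⟨wb x (j+2), ⟨(memB _).2 (Or.inr (Or.inl ⟨x, j+2, hxnf, rfl⟩)),
          none_wb _ _, (mem_wb _ _ _).2 (Or.inr (Or.inr (by rw [hxz, z3])))⟩, ?_⟩
        rintro t ⟨ht, hnt, hzt⟩
        rw [memB] at ht
        rcases ht with ⟨x0, hx0, rfl⟩ | ⟨x0, j0, hx0, rfl⟩ | ⟨p, q, j0, hpq, rfl⟩
        · exact absurd hnt (none_vert x0)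
        · rw [mem_wb] at hzt
          rcases hzt with h | h | h
          · exact absurd h (by simp)
          · simp only [Option.some.injEq, Prod.mk.injEq] at h
            rw [h.1] at hz
            exact absurd hz hx0
          · simp only [Option.some.injEq, Prod.mk.injEq] at h
            have hx0x : x0 = x := hxu x0 ⟨hx0, h.1.symm⟩
            rw [hx0x, z4 j0 j h.2.symm]
        · exact absurd hnt (none_tri p q j0)
      · refine ⟨wb z j, ⟨(memB _).2 (Or.inr (Or.inl ⟨z, j, hz, rfl⟩)),
          none_wb _ _, (mem_wb _ _ _).2 (Or.inr (Or.inl rfl))⟩, ?_⟩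
        rintro t ⟨ht, hnt, hzt⟩
        rw [memB] at ht
        rcases ht with ⟨x0, hx0, rfl⟩ | ⟨x0, j0, hx0, rfl⟩ | ⟨p, q, j0, hpq, rfl⟩
        · exact absurd hnt (none_vert x0)
        · rw [mem_wb] at hzt
          rcases hzt with h | h | h
          · exact absurd h (by simp)
          · simp only [Option.some.injEq, Prod.mk.injEq] at h
            rw [h.1, h.2]
          · simp only [Option.some.injEq, Prod.mk.injEq] at h
            rw [h.1] at hz
            exact absurd (hfix x0) hz
        · exact absurd hnt (none_tri p q j0)
    have key1 : ∀ (x y : Q) (i : ZMod 3), x ≠ y →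
        ∃! t, t ∈ B ∧ some (x, i) ∈ t ∧ some (y, i) ∈ t := by
      intro x y i hxy
      refine ⟨tri x y i, ⟨(memB _).2 (Or.inr (Or.inr ⟨x,y,i,hxy,rfl⟩)),
        (mem_tri _ _ _ _).2 (Or.inl rfl), (mem_tri _ _ _ _).2 (Or.inr (Or.inl rfl))⟩, ?_⟩
      rintro t ⟨ht, hxt, hyt⟩
      rw [memB] at ht
      rcases ht with ⟨x0, hx0, rfl⟩ | ⟨x0, j0, hx0, rfl⟩ | ⟨p, q, j0, hpq, rfl⟩
      · rw [mem_vert] at hxt hyt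
        exact absurd (hxt.trans hyt.symm) hxy
      · rw [mem_wb] at hxt hyt
        simp only [Option.some.injEq, Prod.mk.injEq, reduceCtorEq, false_or] at hxt hyt
        rcases hxt with ⟨h1a, h1b⟩ | ⟨h1a, h1b⟩ <;>
          rcases hyt with ⟨h2a, h2b⟩ | ⟨h2a, h2b⟩ <;>
          first
            | (exfalso; revert h1b h2b; revert i j0; decide)
            | skip
        · exact absurd (h1a.trans h2a.symm) hxy
        · exact absurd (h1a.trans h2a.symm) hxy
      · rw [mem_tri] at hxt hyt
        simp only [Option.some.injEq, Prod.mk.injEq] at hxt hyt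
        rcases hxt with ⟨h1a, h1b⟩ | ⟨h1a, h1b⟩ | ⟨h1a, h1b⟩ <;>
          rcases hyt with ⟨h2a, h2b⟩ | ⟨h2a, h2b⟩ | ⟨h2a, h2b⟩ <;>
          first
            | (exfalso; revert h1b h2b; revert i j0; decide)
            | skip
        · exact absurd (h1a.trans h2a.symm) hxy
        · subst h1a; subst h2a; subst h1b; rfl
        · subst h1a; subst h2a; subst h1b; rw [tri_comm]
        · exact absurd (h1a.trans h2a.symm) hxy
        · exact absurd (h1a.trans h2a.symm) hxy
    have key2 : ∀ (x y : Q) (i : ZMod 3),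
        ∃! t, t ∈ B ∧ some (x, i) ∈ t ∧ some (y, i+1) ∈ t := by
      intro x y i
      by_cases hy : y = op x x
      · by_cases hfx : op x x = x
        · -- y = x, x fixed : vert x
          have hxy : y = x := hy.trans hfx
          subst hxy
          refine ⟨vert y, ⟨(memB _).2 (Or.inl ⟨y, hfx, rfl⟩),
            (mem_vert _ _ _).2 rfl, (mem_vert _ _ _).2 rfl⟩, ?_⟩
          rintro t ⟨ht, hxt, hyt⟩
          rw [memB] at ht
          rcases ht with ⟨x0, hx0, rfl⟩ | ⟨x0, j0, hx0, rfl⟩ | ⟨p, q, j0, hpq, rfl⟩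
          · rw [mem_vert] at hxt; rw [hxt]
          · rw [mem_wb] at hxt hyt
            simp only [Option.some.injEq, Prod.mk.injEq, reduceCtorEq, false_or] at hxt hyt
            rcases hxt with ⟨h1a, h1b⟩ | ⟨h1a, h1b⟩ <;>
              rcases hyt with ⟨h2a, h2b⟩ | ⟨h2a, h2b⟩ <;>
              first
                | (exfalso; revert h1b h2b; revert i j0; decide)
                | skip
            · -- y = x0, y = op x0 x0 : x0 fixed, contra
              exact absurd (h2a.symm.trans h1a) hx0
          · rw [mem_tri] at hxt hyt
            simp only [Option.some.injEq, Prod.mk.injEq] at hxt hyt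
            rcases hxt with ⟨h1a, h1b⟩ | ⟨h1a, h1b⟩ | ⟨h1a, h1b⟩ <;>
              rcases hyt with ⟨h2a, h2b⟩ | ⟨h2a, h2b⟩ | ⟨h2a, h2b⟩ <;>
              first
                | (exfalso; revert h1b h2b; revert i j0; decide)
                | skip
            · -- y = p, y = op p q : q = p
              exact absurd (hcancel p q p (by
                rw [show op p p = p from h1a ▸ hfx]; exact h2a.symm.trans h1a))
                (Ne.symm hpq)
            · -- y = q, y = op p q : p = q
              exact absurd (hcancel q p q (by
                rw [show op q q = q from h1a ▸ hfx, hcomm]; exact h2a.symm.trans h1a)) hpq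
        · -- y = op x x, x not fixed : wb x i
          subst hy
          refine ⟨wb x i, ⟨(memB _).2 (Or.inr (Or.inl ⟨x, i, hfx, rfl⟩)),
            (mem_wb _ _ _).2 (Or.inr (Or.inl rfl)),
            (mem_wb _ _ _).2 (Or.inr (Or.inr rfl))⟩, ?_⟩
          rintro t ⟨ht, hxt, hyt⟩
          rw [memB] at ht
          rcases ht with ⟨x0, hx0, rfl⟩ | ⟨x0, j0, hx0, rfl⟩ | ⟨p, q, j0, hpq, rfl⟩
          · rw [mem_vert] at hxt hyt
            exact absurd (hyt.trans hxt.symm) hfx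
          · rw [mem_wb] at hxt hyt
            simp only [Option.some.injEq, Prod.mk.injEq, reduceCtorEq, false_or] at hxt hyt
            rcases hxt with ⟨h1a, h1b⟩ | ⟨h1a, h1b⟩ <;>
              rcases hyt with ⟨h2a, h2b⟩ | ⟨h2a, h2b⟩ <;>
              first
                | (exfalso; revert h1b h2b; revert i j0; decide)
                | skip
            · subst h1a; subst h1b; rfl
          · rw [mem_tri] at hxt hyt
            simp only [Option.some.injEq, Prod.mk.injEq] at hxt hyt
            rcases hxt with ⟨h1a, h1b⟩ | ⟨h1a, h1b⟩ | ⟨h1a, h1b⟩ <;>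
              rcases hyt with ⟨h2a, h2b⟩ | ⟨h2a, h2b⟩ | ⟨h2a, h2b⟩ <;>
              first
                | (exfalso; revert h1b h2b; revert i j0; decide)
                | skip
            · -- x = p, op x x = op p q : q = x = p contra
              rw [← h1a] at h2a hpq
              exact absurd (hcancel x x q h2a) hpq
            · -- x = q, op x x = op p q : p = x = q contra
              rw [← h1a] at h2a hpq
              rw [hcomm p x] at h2a
              exact absurd (hcancel x x p h2a).symm hpq
      · -- y ≠ op x x : tri x q i with op x q = y
        obtain ⟨q, hq⟩ := hsurj x y
        have hqx : x ≠ q := fun h => hy (by rw [← hq, ← h])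
        refine ⟨tri x q i, ⟨(memB _).2 (Or.inr (Or.inr ⟨x,q,i,hqx,rfl⟩)),
          (mem_tri _ _ _ _).2 (Or.inl rfl),
          (mem_tri _ _ _ _).2 (Or.inr (Or.inr (by rw [hq])))⟩, ?_⟩
        rintro t ⟨ht, hxt, hyt⟩
        rw [memB] at ht
        rcases ht with ⟨x0, hx0, rfl⟩ | ⟨x0, j0, hx0, rfl⟩ | ⟨p, q0, j0, hpq, rfl⟩
        · rw [mem_vert] at hxt hyt
          subst hxt
          exact absurd (hyt.trans hx0.symm) hy
        · rw [mem_wb] at hxt hyt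
          simp only [Option.some.injEq, Prod.mk.injEq, reduceCtorEq, false_or] at hxt hyt
          rcases hxt with ⟨h1a, h1b⟩ | ⟨h1a, h1b⟩ <;>
            rcases hyt with ⟨h2a, h2b⟩ | ⟨h2a, h2b⟩ <;>
            first
              | (exfalso; revert h1b h2b; revert i j0; decide)
              | skip
          · -- x = x0, y = op x0 x0 : contra hy
            exact absurd (h2a.trans (by rw [h1a])) hy
        · rw [mem_tri] at hxt hyt
          simp only [Option.some.injEq, Prod.mk.injEq] at hxt hyt
          rcases hxt with ⟨h1a, h1b⟩ | ⟨h1a, h1b⟩ | ⟨h1a, h1b⟩ <;>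
            rcases hyt with ⟨h2a, h2b⟩ | ⟨h2a, h2b⟩ | ⟨h2a, h2b⟩ <;>
            first
              | (exfalso; revert h1b h2b; revert i j0; decide)
              | skip
          · subst h1a; subst h1b
            rw [hcancel x q0 q (h2a.symm.trans hq.symm)]
          · subst h1a; subst h1b
            rw [hcancel x p q (by rw [hcomm]; exact h2a.symm.trans hq.symm), tri_comm]
    intro a b hab
    rcases a with _ | ⟨x, i⟩ <;> rcases b with _ | ⟨y, j⟩
    · exact absurd rfl hab
    · exact key0 y j
    · obtain ⟨t, ⟨h1, h2, h3⟩, hu⟩ := key0 x i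
      exact ⟨t, ⟨h1, h3, h2⟩, fun t' ⟨k1, k2, k3⟩ => hu t' ⟨k1, k3, k2⟩⟩
    · by_cases hij : i = j
      · subst hij
        exact key1 x y i (fun h => hab (by rw [h]))
      · rcases zsplit i j hij with rfl | rfl
        · exact key2 x y i
        · obtain ⟨t, ⟨h1, h2, h3⟩, hu⟩ := key2 y x j
          exact ⟨t, ⟨h1, h3, h2⟩, fun t' ⟨k1, k2, k3⟩ => hu t' ⟨k1, k3, k2⟩⟩

/-- The half-idempotent commutative quasigroup on `Fin (2u)`. -/
def sop (u : ℕ) (x y : Fin (2*u)) : Fin (2*u) :=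
  ⟨if (x.val + y.val) % 2 = 0 then (x.val + y.val)/2 % u else u + (x.val + y.val)/2 % u, by
    have hu : 0 < u := by have := x.isLt; omega
    have h1 : (x.val + y.val)/2 % u < u := Nat.mod_lt _ hu
    split <;> omega⟩

theorem sop_val (u : ℕ) (x y : Fin (2*u)) : (sop u x y).val =
    if (x.val + y.val) % 2 = 0 then (x.val + y.val)/2 % u else u + (x.val + y.val)/2 % u := rfl

theorem sop_comm (u : ℕ) (x y : Fin (2*u)) : sop u x y = sop u y x := by
  apply Fin.ext
  rw [sop_val, sop_val, Nat.add_comm x.val y.val]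

theorem mod_eq_small {u a b : ℕ} (h : a % u = b % u) (h1 : a < b + u) (h2 : b < a + u) :
    a = b := by
  rcases le_total a b with hab | hab
  · have hd : u ∣ b - a := (Nat.modEq_iff_dvd' hab).mp h
    have := Nat.eq_zero_of_dvd_of_lt hd (by omega)
    omega
  · have hd : u ∣ a - b := (Nat.modEq_iff_dvd' hab).mp h.symm
    have := Nat.eq_zero_of_dvd_of_lt hd (by omega)
    omega

theorem sop_cancel (u : ℕ) (x y z : Fin (2*u)) (h : sop u x y = sop u x z) : y = z := by
  have hu : 0 < u := by have := x.isLt; omega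
  have hv : (sop u x y).val = (sop u x z).val := congrArg Fin.val h
  rw [sop_val, sop_val] at hv
  have m1 : (x.val + y.val)/2 % u < u := Nat.mod_lt _ hu
  have m2 : (x.val + z.val)/2 % u < u := Nat.mod_lt _ hu
  have hxy := x.isLt
  have hyy := y.isLt
  have hzz := z.isLt
  apply Fin.ext
  by_cases p1 : (x.val + y.val) % 2 = 0 <;> by_cases p2 : (x.val + z.val) % 2 = 0 <;>
    simp only [p1, p2, if_true, if_false, if_pos, if_neg, not_false_iff] at hv
  · have := mod_eq_small hv (by omega) (by omega)
    omega
  · omega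
  · omega
  · have hv' : (x.val + y.val)/2 % u = (x.val + z.val)/2 % u := by omega
    have := mod_eq_small hv' (by omega) (by omega)
    omega

theorem sop_sq (u : ℕ) (x : Fin (2*u)) : (sop u x x).val = x.val % u := by
  rw [sop_val]
  have h2 : (x.val + x.val) % 2 = 0 := by omega
  rw [if_pos h2]
  congr 1
  omega

theorem sop_fix (u : ℕ) (x : Fin (2*u)) :
    sop u (sop u x x) (sop u x x) = sop u x x := by
  have hu : 0 < u := by have := x.isLt; omega
  apply Fin.ext
  rw [sop_sq, sop_sq]
  exact Nat.mod_mod_of_dvd _ (dvd_refl u)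

theorem sop_fix_iff (u : ℕ) (x : Fin (2*u)) : sop u x x = x ↔ x.val < u := by
  have hu : 0 < u := by have := x.isLt; omega
  constructor
  · intro h
    have := congrArg Fin.val h
    rw [sop_sq] at this
    have := Nat.mod_lt x.val hu
    omega
  · intro h
    apply Fin.ext
    rw [sop_sq]
    exact Nat.mod_eq_of_lt h

theorem sop_bij (u : ℕ) (z : Fin (2*u)) (hz : sop u z z = z) :
    ∃! x, sop u x x ≠ x ∧ sop u x x = z := by
  have hu : 0 < u := by have := z.isLt; omega
  have hzu : z.val < u := (sop_fix_iff u z).1 hz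
  refine ⟨⟨u + z.val, by omega⟩, ⟨?_, ?_⟩, ?_⟩
  · rw [Ne, sop_fix_iff]
    simp only
    omega
  · apply Fin.ext
    rw [sop_sq]
    simp only
    rw [Nat.add_mod_left]
    exact Nat.mod_eq_of_lt hzu
  · rintro x ⟨hx1, hx2⟩
    rw [Ne, sop_fix_iff] at hx1
    have hx2' : x.val % u = z.val := by
      have := congrArg Fin.val hx2
      rw [sop_sq] at this
      exact this
    have hxlt := x.isLt
    have : x.val % u = x.val - u := by
      rw [Nat.mod_eq_sub_mod (by omega)]
      exact Nat.mod_eq_of_lt (by omega)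
    apply Fin.ext
    simp only
    omega

/-- For n ≡ 0 or 2 (mod 6), the edge set of K_n can be partitioned into a
perfect matching and triangles: there are a family F of pairwise-disjoint
2-sets covering all vertices and a family T of 3-sets such that every 2-set of
vertices either lies in F (and in no triangle) or is contained in exactly one
triangle of T. -/
theorem complete_graph_matching_triangle_partition (n : ℕ)
    (hn : n % 6 = 0 ∨ n % 6 = 2) :
    ∃ F T : Finset (Finset (Fin n)),
      (∀ e ∈ F, e.card = 2) ∧
      (F : Set (Finset (Fin n))).PairwiseDisjoint id ∧
      (∀ v : Fin n, ∃ e ∈ F, v ∈ e) ∧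
      (∀ t ∈ T, t.card = 3) ∧
      (∀ e : Finset (Fin n), e.card = 2 →
        ((e ∈ F ∧ ∀ t ∈ T, ¬ e ⊆ t) ∨ (e ∉ F ∧ ∃! t, t ∈ T ∧ e ⊆ t))) := by
  classical
  obtain ⟨B, hB⟩ : ∃ B : Finset (Finset (Fin (n+1))), IsSTS B := by
    rcases hn with h0 | h2
    · -- n = 6u : Skolem construction
      set u := n / 6 with hu
      obtain ⟨B0, hB0⟩ := skolem_sts (sop u) (sop_comm u) (sop_cancel u)
        (sop_fix u) (sop_bij u)
      have hcard : Fintype.card (Option (Fin (2*u) × ZMod 3)) = n + 1 := by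
        simp only [Fintype.card_option, Fintype.card_prod, Fintype.card_fin]
        have : Fintype.card (ZMod 3) = 3 := by simp
        rw [this]
        omega
      exact ⟨_, sts_transport (Fintype.equivFinOfCardEq hcard) hB0⟩
    · -- n = 6k+2 : Bose construction
      set w := (n+1)/3 with hw
      have hw3 : n + 1 = 3 * w := by omega
      have hwodd : w % 2 = 1 := by omega
      haveI : NeZero w := ⟨by omega⟩
      set i2 := (2 : ZMod w)⁻¹ with hi2
      have h2u : IsUnit (2 : ZMod w) := by
        have : ((2 : ℕ) : ZMod w) = (2 : ZMod w) := by push_cast; ring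
        rw [← this, ZMod.isUnit_iff_coprime]
        rw [Nat.coprime_two_left]
        exact Nat.odd_iff.2 hwodd
      have h2i : (2 : ZMod w) * i2 = 1 := ZMod.mul_inv_of_unit _ h2u
      obtain ⟨B0, hB0⟩ := bose_sts (Q := ZMod w) (fun x y => (x + y) * i2)
        (fun x y => by rw [add_comm])
        (fun x y z h => by
          have := congrArg (· * 2) h
          simp only [mul_assoc, mul_comm i2 2, h2i, mul_one] at this
          exact add_left_cancel this)
        (fun x => by
          rw [show x + x = x * 2 by ring, mul_assoc, mul_comm 2 i2, show i2 * 2 = 1 by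
            rw [mul_comm]; exact h2i, mul_one])
      have hcard : Fintype.card (ZMod w × ZMod 3) = n + 1 := by
        rw [Fintype.card_prod, ZMod.card, ZMod.card]
        omega
      exact ⟨_, sts_transport (Fintype.equivFinOfCardEq hcard) hB0⟩
  exact delete_point hB
end
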